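/- arXiv:1708.01330 — 6 statements merged into one kernel-verified Lean document; each statement's English description precedes it below -/
import Mathlib

section
/- Let Λ be a unital R-algebra, H a subgroup of a group G acting globally on Λ (written h·a for h ∈ H, a ∈ Λ), and let α be the extension by zero of this H-action to G. Let T be a left transversal of H in G with e ∈ T, and for g ∈ G and t ∈ T let j(g,t) ∈ T and h(g,t) ∈ H be the unique elements with g·t = j(g,t)·h(g,t). Let Γ = ⨁_{t∈T} Λ (finitely supported functions T → Λ with componentwise operations), and for g ∈ G let β_g : Γ → Γ be the R-algebra map sending the element with component λ ∈ Λ in position t and 0 elsewhere to the element with component h(g,t)·λ in position j(g,t) and 0 elsewhere. Then each β_g is an R-algebra automorphism of Γ, β : G → Aut_R(Γ) is a group homomorphism, and (Γ, β), together with the embedding φ : Λ → Γ of Λ as the component at e, is an enveloping action of (Λ, α). -/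
/-- `(L, β)` together with the embedding `φ : Λ → L` is an enveloping action
(globalization) of the partial action `(S, θ)` of `G` on the `R`-algebra `Λ`:
`β` is a global action of `G` on `L` by `R`-algebra automorphisms, `φ` is an
injective homomorphism of `R`-algebras whose range is an ideal of `L`,
`L = Σ_g β g (φ(Λ))`, `φ(S g) = φ(Λ) ∩ β g (φ(Λ))`, and `φ ∘ θ g = β g ∘ φ`
on `S (g⁻¹)`. -/
structure IsEnvelopingAction (R : Type*) (G : Type*) (Λ : Type*) (L : Type*)
    [CommRing R] [Group G] [Ring Λ] [Algebra R Λ]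
    [NonUnitalNonAssocSemiring L] [Module R L]
    (S : G → Set Λ) (θ : G → Λ → Λ) (β : G → L → L) (φ : Λ → L) : Prop where
  β_one : ∀ x : L, β 1 x = x
  β_comp : ∀ (g h : G) (x : L), β g (β h x) = β (g * h) x
  β_add : ∀ (g : G) (x y : L), β g (x + y) = β g x + β g y
  β_mul : ∀ (g : G) (x y : L), β g (x * y) = β g x * β g y
  β_smul : ∀ (g : G) (r : R) (x : L), β g (r • x) = r • β g x
  β_bijective : ∀ g : G, Function.Bijective (β g)
  φ_injective : Function.Injective φ
  φ_add : ∀ x y : Λ, φ (x + y) = φ x + φ y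
  φ_mul : ∀ x y : Λ, φ (x * y) = φ x * φ y
  φ_smul : ∀ (r : R) (x : Λ), φ (r • x) = r • φ x
  ideal_mul_left : ∀ a : L, ∀ x ∈ Set.range φ, a * x ∈ Set.range φ
  ideal_mul_right : ∀ a : L, ∀ x ∈ Set.range φ, x * a ∈ Set.range φ
  spans : AddSubmonoid.closure (⋃ g : G, β g '' Set.range φ) = (⊤ : AddSubmonoid L)
  intersect : ∀ g : G, φ '' S g = Set.range φ ∩ β g '' Set.range φ
  equivariant : ∀ g : G, ∀ a ∈ S (g⁻¹), φ (θ g a) = β g (φ a)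

open Classical in
/-- Let `H ≤ G` act globally on the unital `R`-algebra `Λ` via
`ρ`, let `α` be the extension by zero of this action to `G`, let `T` be a left
transversal of `H` in `G` containing `1`, and factor `g * t = j g t * h g t`
with `j g t ∈ T`, `h g t ∈ H`. Let `Γ = ⨁_{t ∈ T} Λ` (finitely supported
functions) and let `β g` send the single-component element `single t λ` to
`single (j g t) (ρ (h g t) λ)`. Then `(Γ, β)`, with the embedding of `Λ` as the
component at `1 ∈ T`, is an enveloping action of `(Λ, α)`; in particular each
`β g` is an `R`-algebra automorphism of `Γ` and `β` is a group homomorphism. -/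
theorem statement5 {R G Λ : Type*} [CommRing R] [Group G] [Ring Λ] [Algebra R Λ]
    (H : Subgroup G) (ρ : H →* (Λ ≃ₐ[R] Λ))
    (T : Set G) (h1T : (1 : G) ∈ T)
    (htrans : ∀ g : G, ∃! t : T, (t : G)⁻¹ * g ∈ H)
    (j : G → T → T) (h : G → T → H)
    (hjh : ∀ (g : G) (t : T), g * (t : G) = (j g t : G) * ((h g t : G)))
    (β : G → (↥T →₀ Λ) → (↥T →₀ Λ))
    (hβ : ∀ (g : G) (f : ↥T →₀ Λ),
      β g f = f.sum fun t lam => Finsupp.single (j g t) (ρ (h g t) lam)) :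
    IsEnvelopingAction R G Λ (↥T →₀ Λ)
      (fun g => if g ∈ H then Set.univ else {0})
      (fun g => if hg : g ∈ H then ⇑(ρ ⟨g, hg⟩) else 0)
      β (fun lam => Finsupp.single ⟨1, h1T⟩ lam) := by
  classical
  set e : T := ⟨1, h1T⟩ with he
  have hce : (e : G) = 1 := rfl
  -- uniqueness of the decomposition g = t * η
  have key : ∀ (t₁ t₂ : T) (η₁ η₂ : H), (t₁ : G) * η₁ = (t₂ : G) * η₂ → t₁ = t₂ ∧ η₁ = η₂ := by
    intro t₁ t₂ η₁ η₂ heq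
    obtain ⟨t, -, huniq⟩ := htrans ((t₁ : G) * η₁)
    have h1 : t₁ = t := huniq t₁ (by simp [η₁.2])
    have h2 : t₂ = t := huniq t₂ (by rw [heq]; simp [η₂.2])
    have hte : t₁ = t₂ := h1.trans h2.symm
    refine ⟨hte, Subtype.ext ?_⟩
    have : (t₁ : G) * η₁ = (t₁ : G) * η₂ := by rw [heq, hte]
    exact mul_left_cancel this
  have jh_spec : ∀ (g : G) (t t' : T) (η : H), g * (t : G) = (t' : G) * (η : G) →
      j g t = t' ∧ h g t = η := fun g t t' η he' => key _ _ _ _ ((hjh g t).symm.trans he')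
  have j_one : ∀ t : T, j 1 t = t := fun t => (jh_spec 1 t t 1 (by simp)).1
  have h_one : ∀ t : T, h 1 t = 1 := fun t => (jh_spec 1 t t 1 (by simp)).2
  have jh_mul : ∀ (g₁ g₂ : G) (t : T),
      j (g₁ * g₂) t = j g₁ (j g₂ t) ∧ h (g₁ * g₂) t = h g₁ (j g₂ t) * h g₂ t := by
    intro g₁ g₂ t
    apply jh_spec
    have hc : (((h g₁ (j g₂ t) * h g₂ t : H)) : G) = (h g₁ (j g₂ t) : G) * (h g₂ t : G) := rfl
    rw [hc, mul_assoc g₁ g₂, hjh g₂ t, ← mul_assoc g₁, hjh g₁ (j g₂ t), mul_assoc]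
  -- β on single-component elements
  have βsingle : ∀ (g : G) (t : T) (lam : Λ),
      β g (Finsupp.single t lam) = Finsupp.single (j g t) (ρ (h g t) lam) := by
    intro g t lam
    rw [hβ]
    exact Finsupp.sum_single_index (by simp)
  have βzero : ∀ g : G, β g 0 = 0 := by
    intro g; rw [hβ]; exact Finsupp.sum_zero_index
  -- β g agrees with a linear map
  set B : G → ((↥T →₀ Λ) →ₗ[R] (↥T →₀ Λ)) := fun g =>
    Finsupp.lsum R fun t => (Finsupp.lsingle (j g t)).comp (ρ (h g t)).toLinearMap with hBdef
  have hB : ∀ g : G, β g = ⇑(B g) := by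
    intro g
    funext f
    rw [hβ, hBdef, Finsupp.lsum_apply]
    rfl
  have B_one : B (1 : G) = LinearMap.id := by
    apply Finsupp.lhom_ext
    intro t a
    rw [← hB, βsingle, j_one, h_one, map_one, AlgEquiv.one_apply, LinearMap.id_apply]
  have B_comp : ∀ g₁ g₂ : G, (B g₁) ∘ₗ (B g₂) = B (g₁ * g₂) := by
    intro g₁ g₂
    apply Finsupp.lhom_ext
    intro t a
    simp only [LinearMap.comp_apply, ← hB, βsingle, (jh_mul g₁ g₂ t).1, (jh_mul g₁ g₂ t).2,
      map_mul, AlgEquiv.mul_apply]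
  have βone : ∀ x : ↥T →₀ Λ, β 1 x = x := by
    intro x; rw [hB, B_one, LinearMap.id_apply]
  have βcomp : ∀ (g₁ g₂ : G) (x : ↥T →₀ Λ), β g₁ (β g₂ x) = β (g₁ * g₂) x := by
    intro g₁ g₂ x
    rw [hB g₂, hB g₁, hB (g₁ * g₂)]
    exact LinearMap.congr_fun (B_comp g₁ g₂) x
  have βadd : ∀ (g : G) (x y : ↥T →₀ Λ), β g (x + y) = β g x + β g y := by
    intro g x y; rw [hB]; exact map_add _ x y
  have single_mul_ne : ∀ (t s : ↥T), t ≠ s → ∀ (a b : Λ),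
      (Finsupp.single t a * Finsupp.single s b : ↥T →₀ Λ) = 0 := by
    intro t s hts a b
    ext u
    rw [Finsupp.mul_apply, Finsupp.zero_apply]
    rcases eq_or_ne t u with rfl | hu
    · rw [Finsupp.single_eq_of_ne' (Ne.symm hts), mul_zero]
    · rw [Finsupp.single_eq_of_ne' hu, zero_mul]
  have j_inj : ∀ g : G, Function.Injective (j g) := by
    intro g
    have hlr : ∀ t : T, j g⁻¹ (j g t) = t := by
      intro t
      rw [← (jh_mul g⁻¹ g t).1, inv_mul_cancel, j_one]
    intro t s hts
    rw [← hlr t, ← hlr s, hts]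
  have βmul : ∀ (g : G) (x y : ↥T →₀ Λ), β g (x * y) = β g x * β g y := by
    intro g x y
    induction x using Finsupp.induction_linear with
    | zero => rw [zero_mul, βzero, zero_mul]
    | add f₁ f₂ hf₁ hf₂ => rw [add_mul, βadd, βadd, hf₁, hf₂, add_mul]
    | single t a =>
      induction y using Finsupp.induction_linear with
      | zero => rw [mul_zero, βzero, mul_zero]
      | add f₁ f₂ hf₁ hf₂ => rw [mul_add, βadd, βadd, hf₁, hf₂, mul_add]
      | single s b =>
        rcases eq_or_ne t s with rfl | hts
        · rw [← Finsupp.single_mul, βsingle, βsingle, βsingle, ← Finsupp.single_mul, map_mul]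
        · rw [single_mul_ne t s hts, βzero, βsingle, βsingle,
            single_mul_ne _ _ (fun hcon => hts (j_inj g hcon))]
  constructor
  · exact βone
  · exact βcomp
  · exact βadd
  · exact βmul
  · intro g r x; rw [hB]; exact map_smul _ r x
  · intro g
    refine Function.bijective_iff_has_inverse.mpr ⟨β g⁻¹, fun x => ?_, fun x => ?_⟩
    · rw [βcomp, inv_mul_cancel, βone]
    · rw [βcomp, mul_inv_cancel, βone]
  · exact fun a b hab => by
      simpa using DFunLike.congr_fun hab e
  · intro x y; exact Finsupp.single_add _ _ _
  · intro x y; exact Finsupp.single_mul _ _ _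
  · intro r x; rw [Finsupp.smul_single]
  · rintro a x ⟨lam, rfl⟩
    refine ⟨a e * lam, ?_⟩
    ext u
    rw [Finsupp.mul_apply]
    rcases eq_or_ne e u with rfl | hu
    · rw [Finsupp.single_eq_same, Finsupp.single_eq_same]
    · rw [Finsupp.single_eq_of_ne' hu, Finsupp.single_eq_of_ne' hu, mul_zero]
  · rintro a x ⟨lam, rfl⟩
    refine ⟨lam * a e, ?_⟩
    ext u
    rw [Finsupp.mul_apply]
    rcases eq_or_ne e u with rfl | hu
    · rw [Finsupp.single_eq_same, Finsupp.single_eq_same]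
    · rw [Finsupp.single_eq_of_ne' hu, Finsupp.single_eq_of_ne' hu, zero_mul]
  · rw [eq_top_iff]
    rintro f -
    induction f using Finsupp.induction_linear with
    | zero => exact zero_mem _
    | add f₁ f₂ hf₁ hf₂ => exact add_mem hf₁ hf₂
    | single t lam =>
      apply AddSubmonoid.subset_closure
      apply Set.mem_iUnion.mpr
      refine ⟨(t : G), Finsupp.single e lam, ⟨lam, rfl⟩, ?_⟩
      have hsp := jh_spec (t : G) e t 1 (by rw [hce]; simp)
      rw [βsingle, hsp.1, hsp.2, map_one, AlgEquiv.one_apply]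
  · intro g
    by_cases hg : g ∈ H
    · rw [if_pos hg]
      have hsp := jh_spec g e e ⟨g, hg⟩ (by rw [hce]; simp)
      rw [Set.image_univ]
      have himg : β g '' Set.range (fun lam : Λ => Finsupp.single e lam) =
          Set.range (fun lam : Λ => Finsupp.single e lam) := by
        ext x
        constructor
        · rintro ⟨-, ⟨lam, rfl⟩, rfl⟩
          exact ⟨ρ (h g e) lam, by rw [βsingle, hsp.1]⟩
        · rintro ⟨lam, rfl⟩
          refine ⟨Finsupp.single e ((ρ (h g e)).symm lam), ⟨_, rfl⟩, ?_⟩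
          rw [βsingle, hsp.1, AlgEquiv.apply_symm_apply]
      rw [himg, Set.inter_self]
    · rw [if_neg hg]
      have hje : j g e ≠ e := by
        intro hcon
        apply hg
        have h1 : g * (e : G) = (j g e : G) * (h g e : G) := hjh g e
        rw [hcon, hce, mul_one, one_mul] at h1
        rw [h1]
        exact (h g e).2
      ext x
      simp only [Set.mem_image, Set.mem_inter_iff, Set.mem_range, Set.mem_singleton_iff]
      constructor
      · rintro ⟨a, rfl, rfl⟩
        exact ⟨⟨0, rfl⟩, Finsupp.single e 0, ⟨0, rfl⟩,
          by rw [Finsupp.single_zero, βzero]⟩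
      · rintro ⟨⟨lam, rfl⟩, y, ⟨mu, rfl⟩, hy⟩
        rw [βsingle] at hy
        have hl : lam = 0 := by
          have hv := DFunLike.congr_fun hy e
          rw [Finsupp.single_eq_of_ne' hje, Finsupp.single_eq_same] at hv
          exact hv.symm
        exact ⟨0, rfl, by rw [hl]⟩
  · intro g a ha
    by_cases hg : g ∈ H
    · have hsp := jh_spec g e e ⟨g, hg⟩ (by rw [hce]; simp)
      show Finsupp.single e ((if hgg : g ∈ H then ⇑(ρ ⟨g, hgg⟩) else 0) a)
        = β g (Finsupp.single e a)
      rw [dif_pos hg, βsingle, hsp.1, hsp.2]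
    · have hg' : ¬ (g⁻¹ ∈ H) := fun hmem => hg (by simpa using inv_mem hmem)
      have ha0 : a = 0 := by
        have ha' : a ∈ (if g⁻¹ ∈ H then (Set.univ : Set Λ) else {0}) := ha
        rw [if_neg hg'] at ha'
        exact ha'
      subst ha0
      show Finsupp.single e ((if hgg : g ∈ H then ⇑(ρ ⟨g, hgg⟩) else 0) 0)
        = β g (Finsupp.single e 0)
      rw [dif_neg hg, Finsupp.single_zero, βzero, Pi.zero_apply, Finsupp.single_zero]
end

section
/- Let Λ be a unital R-algebra, H a subgroup of a group G acting globally on Λ (written h·a), T a left transversal of H in G with e ∈ T, and j(g,t) ∈ T, h(g,t) ∈ H defined by g·t = j(g,t)·h(g,t). Let Γ = ⨁_{t∈T} Λ and define β_g : Γ → Γ by sending the element with component λ in position t and 0 elsewhere to the element with component h(g,t)·λ in position j(g,t) and 0 elsewhere. Then β_e is the identity of Γ and β_g ∘ β_t = β_{gt} for all g, t ∈ G; that is, β defines a global action of G on Γ. -/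
/-- Let `H ≤ G` act globally on the unital `R`-algebra `Λ` via
`ρ`, let `T` be a left transversal of `H` in `G` with `1 ∈ T`, and factor
`g * t = j g t * h g t` with `j g t ∈ T`, `h g t ∈ H`. On `Γ = ⨁_{t ∈ T} Λ`
let `β g` send `single t λ` to `single (j g t) (ρ (h g t) λ)`. Then `β 1` is the
identity of `Γ` and `β g ∘ β t = β (g * t)` for all `g t : G`; that is, `β`
defines a global action of `G` on `Γ`. -/
theorem statement7 {R G Λ : Type*} [CommRing R] [Group G] [Ring Λ] [Algebra R Λ]
    (H : Subgroup G) (ρ : H →* (Λ ≃ₐ[R] Λ))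
    (T : Set G) (h1T : (1 : G) ∈ T)
    (htrans : ∀ g : G, ∃! t : T, (t : G)⁻¹ * g ∈ H)
    (j : G → T → T) (h : G → T → H)
    (hjh : ∀ (g : G) (t : T), g * (t : G) = (j g t : G) * ((h g t : G)))
    (β : G → (↥T →₀ Λ) → (↥T →₀ Λ))
    (hβ : ∀ (g : G) (f : ↥T →₀ Λ),
      β g f = f.sum fun t lam => Finsupp.single (j g t) (ρ (h g t) lam)) :
    (∀ f : ↥T →₀ Λ, β 1 f = f) ∧
    ∀ (g t : G) (f : ↥T →₀ Λ), β g (β t f) = β (g * t) f := by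
  -- uniqueness of factorization
  have huniq : ∀ (g : G) (a b : T), ((a : G)⁻¹ * g ∈ H) → ((b : G)⁻¹ * g ∈ H) → a = b := by
    intro g a b ha hb
    obtain ⟨c, _, hc⟩ := htrans g
    rw [hc a ha, hc b hb]
  have j1 : ∀ t : T, j 1 t = t := by
    intro t
    apply huniq (t : G)
    · have := hjh 1 t
      rw [one_mul] at this
      rw [this]
      group
      exact (h 1 t).2
    · simp [H.one_mem]
  have h1 : ∀ t : T, h 1 t = 1 := by
    intro t
    have := hjh 1 t
    rw [one_mul, j1 t] at this
    ext
    have : (t : G) * 1 = (t : G) * (h 1 t : G) := by rw [mul_one]; exact this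
    simpa using (mul_left_cancel this).symm
  -- cocycle identities
  have jcoc : ∀ (g t : G) (s : T), j g (j t s) = j (g * t) s := by
    intro g t s
    apply huniq (g * t * (s : G))
    · have : g * t * (s : G) = (j g (j t s) : G) * ((h g (j t s) : G) * (h t s : G)) := by
        rw [mul_assoc, hjh t s, ← mul_assoc, hjh g (j t s), mul_assoc]
      rw [this]
      group
      exact H.mul_mem (h g (j t s)).2 (h t s).2
    · rw [hjh (g * t) s]
      group
      exact (h (g * t) s).2
  have hcoc : ∀ (g t : G) (s : T), h g (j t s) * h t s = h (g * t) s := by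
    intro g t s
    ext
    have e1 : g * t * (s : G) = (j g (j t s) : G) * ((h g (j t s) : G) * (h t s : G)) := by
      rw [mul_assoc, hjh t s, ← mul_assoc, hjh g (j t s), mul_assoc]
    have e2 : g * t * (s : G) = (j (g * t) s : G) * (h (g * t) s : G) := hjh (g * t) s
    rw [jcoc g t s] at e1
    have := mul_left_cancel (e1.symm.trans e2)
    simpa using this
  constructor
  · intro f
    rw [hβ]
    have : (f.sum fun t lam => Finsupp.single (j 1 t) (ρ (h 1 t) lam))
        = f.sum fun t lam => Finsupp.single t lam := by
      apply Finsupp.sum_congr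
      intro t _
      rw [j1, h1]
      simp
    rw [this, Finsupp.sum_single]
  · intro g t f
    rw [hβ, hβ, hβ]
    rw [Finsupp.sum_sum_index (by intro i; simp) (by intro i a b; simp [Finsupp.single_add])]
    congr 1
    ext s lam
    rw [Finsupp.sum_single_index (by simp)]
    rw [jcoc g t s, ← hcoc g t s, map_mul]
    rfl
end

section
/- Let Λ be a unital indecomposable R-algebra, n a positive integer, and α a partial action of a group G on Λ^n admitting an enveloping action. Then the set Y = {e_1, …, e_n} of primitive central idempotents of Λ^n (e_i having identity of Λ in the i-th coordinate and 0 elsewhere) is α-invariant: for every g ∈ G, if e_i ∈ S_{g⁻¹} then α_g(e_i) ∈ Y, i.e. α_g(e_i) is again a primitive central idempotent of Λ^n. -/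
/-- A partial action of a group `G` on an `R`-algebra `Λ`: a family of ideals
`S g` of `Λ` together with `R`-algebra isomorphisms `θ g : S g⁻¹ → S g`
(encoded as total maps `Λ → Λ`, whose behaviour is constrained only on `S (g⁻¹)`),
such that `S 1 = Λ`, `θ 1 = id`, the preimage under `θ h` of `S h ∩ S (g⁻¹)`
lies in `S ((g*h)⁻¹)`, and `θ g ∘ θ h = θ (g*h)` on that preimage. -/
structure IsPartialAction (R : Type*) (G : Type*) (Λ : Type*)
    [CommRing R] [Group G] [Ring Λ] [Algebra R Λ]
    (S : G → Set Λ) (θ : G → Λ → Λ) : Prop where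
  zero_mem : ∀ g : G, (0 : Λ) ∈ S g
  add_mem : ∀ g : G, ∀ x ∈ S g, ∀ y ∈ S g, x + y ∈ S g
  neg_mem : ∀ g : G, ∀ x ∈ S g, -x ∈ S g
  smul_mem : ∀ (g : G) (r : R), ∀ x ∈ S g, r • x ∈ S g
  mul_mem_left : ∀ (g : G) (a : Λ), ∀ x ∈ S g, a * x ∈ S g
  mul_mem_right : ∀ (g : G) (a : Λ), ∀ x ∈ S g, x * a ∈ S g
  maps_to : ∀ g : G, ∀ x ∈ S (g⁻¹), θ g x ∈ S g
  map_add : ∀ g : G, ∀ x ∈ S (g⁻¹), ∀ y ∈ S (g⁻¹), θ g (x + y) = θ g x + θ g y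
  map_mul : ∀ g : G, ∀ x ∈ S (g⁻¹), ∀ y ∈ S (g⁻¹), θ g (x * y) = θ g x * θ g y
  map_smul : ∀ (g : G) (r : R), ∀ x ∈ S (g⁻¹), θ g (r • x) = r • θ g x
  injOn : ∀ g : G, Set.InjOn (θ g) (S (g⁻¹))
  surjOn : ∀ g : G, Set.SurjOn (θ g) (S (g⁻¹)) (S g)
  S_one : S (1 : G) = Set.univ
  one_act : ∀ x : Λ, θ 1 x = x
  dom_comp : ∀ g h : G, ∀ x ∈ S (h⁻¹), θ h x ∈ S h ∩ S (g⁻¹) → x ∈ S ((g * h)⁻¹)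
  comp : ∀ g h : G, ∀ x ∈ S (h⁻¹), θ h x ∈ S h ∩ S (g⁻¹) → θ g (θ h x) = θ (g * h) x

universe u v w

/-- The partial action `(S, θ)` of `G` on the `R`-algebra `Λ` admits an
enveloping action: there is a (possibly non-unital) `R`-algebra `L`, a global
action `β` of `G` on `L`, and an embedding `φ : Λ → L` making `(L, β, φ)` an
enveloping action of `(S, θ)`. -/
def HasEnvelopingAction (R : Type u) (G : Type v) (Λ : Type w)
    [CommRing R] [Group G] [Ring Λ] [Algebra R Λ]
    (S : G → Set Λ) (θ : G → Λ → Λ) : Prop :=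
  ∃ (L : Type (max v w)) (iL : NonUnitalNonAssocSemiring L)
    (mL : @Module R L _ iL.toAddCommMonoid) (β : G → L → L) (φ : Λ → L),
    @IsEnvelopingAction R G Λ L _ _ _ _ iL mL S θ β φ


/-- The image under `θ g` of a central idempotent of `S g⁻¹` is central. -/
theorem cent_aux {R : Type*} {G : Type*} {Λ' : Type*}
    [CommRing R] [Group G] [Ring Λ'] [Algebra R Λ']
    {S : G → Set Λ'} {θ : G → Λ' → Λ'}
    (hpa : IsPartialAction R G Λ' S θ) (g : G) {c : Λ'} (hc : c ∈ S g⁻¹)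
    (hc2 : c * c = c) (hcc : ∀ x, c * x = x * c) :
    ∀ x, θ g c * x = x * θ g c := by
  intro x
  have hf : θ g c ∈ S g := hpa.maps_to g c hc
  have hff : θ g c * θ g c = θ g c := by rw [← hpa.map_mul g c hc c hc, hc2]
  have hfx : θ g c * x ∈ S g := hpa.mul_mem_right g x (θ g c) hf
  have hxf : x * θ g c ∈ S g := hpa.mul_mem_left g x (θ g c) hf
  obtain ⟨a, ha, haa⟩ := hpa.surjOn g hfx
  obtain ⟨b, hb, hbb⟩ := hpa.surjOn g hxf
  have hca : c * a = a := by
    apply hpa.injOn g (hpa.mul_mem_left g⁻¹ c a ha) ha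
    rw [hpa.map_mul g c hc a ha, haa, ← mul_assoc, hff]
  have hbc : b * c = b := by
    apply hpa.injOn g (hpa.mul_mem_right g⁻¹ c b hb) hb
    rw [hpa.map_mul g b hb c hc, hbb, mul_assoc, hff]
  have h1 : (θ g c * x) * θ g c = θ g c * x := by
    rw [← haa, ← hpa.map_mul g a ha c hc, ← hcc a, hca, haa]
  have h2 : θ g c * (x * θ g c) = x * θ g c := by
    rw [← hbb, ← hpa.map_mul g c hc b hb, hcc b, hbc, hbb]
  calc θ g c * x = (θ g c * x) * θ g c := h1.symm
    _ = θ g c * (x * θ g c) := mul_assoc _ _ _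
    _ = x * θ g c := h2

/-- Let `Λ` be a unital indecomposable `R`-algebra and `α` a
partial action of `G` on `Λ^n` admitting an enveloping action. Then the set of
primitive central idempotents `{e_1, …, e_n}` (where `e_i = Pi.single i 1`) is
`α`-invariant: if `e_i ∈ S (g⁻¹)` then `α_g e_i` is again some `e_j`. -/
theorem statement11 {R : Type u} {G : Type v} {Λ : Type w}
    [CommRing R] [Group G] [Ring Λ] [Algebra R Λ]
    (hindec : ∀ a : Λ, a * a = a → (∀ x : Λ, a * x = x * a) → a = 0 ∨ a = 1)
    (n : ℕ) (hn : 0 < n)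
    (S : G → Set (Fin n → Λ)) (θ : G → (Fin n → Λ) → (Fin n → Λ))
    (hpa : IsPartialAction R G (Fin n → Λ) S θ)
    (hglob : HasEnvelopingAction R G (Fin n → Λ) S θ) :
    ∀ (g : G) (i : Fin n), Pi.single i (1 : Λ) ∈ S (g⁻¹) →
      ∃ j : Fin n, θ g (Pi.single i (1 : Λ)) = Pi.single j (1 : Λ) := by
  classical
  intro g i hei
  by_cases h01 : (1 : Λ) = 0
  · refine ⟨i, funext fun m => ?_⟩
    have key : ∀ x y : Λ, x = y := fun x y => by
      calc x = x * 1 := (mul_one x).symm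
        _ = 0 := by rw [h01, mul_zero]
        _ = y * 1 := by rw [h01, mul_zero]
        _ = y := mul_one y
    exact key _ _
  set e : Fin n → Λ := Pi.single i 1 with he
  have hsingle_idem : ∀ j : Fin n,
      (Pi.single j (1:Λ) : Fin n → Λ) * (Pi.single j (1:Λ) : Fin n → Λ)
        = (Pi.single j (1:Λ) : Fin n → Λ) := by
    intro j; funext m
    by_cases hm : m = j <;> simp [Pi.mul_apply, Pi.single_apply, hm]
  have hsingle_cent : ∀ (j : Fin n) (x : Fin n → Λ),
      (Pi.single j (1:Λ) : Fin n → Λ) * x = x * (Pi.single j (1:Λ) : Fin n → Λ) := by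
    intro j x; funext m
    by_cases hm : m = j <;> simp [Pi.mul_apply, Pi.single_apply, hm]
  have hf_cent := cent_aux hpa g hei (hsingle_idem i) (hsingle_cent i)
  have hf_mem : θ g e ∈ S g := hpa.maps_to g e hei
  have hf_idem : θ g e * θ g e = θ g e := by
    rw [← hpa.map_mul g e hei e hei]
    exact congrArg (θ g) (hsingle_idem i)
  have hcoord : ∀ k : Fin n, θ g e k = 0 ∨ θ g e k = 1 := by
    intro k
    apply hindec
    · exact congrFun hf_idem k
    · intro x; exact congrFun (hf_cent (fun _ => x)) k
  have hθ0 : ∀ g' : G, θ g' 0 = 0 := by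
    intro g'
    have h := hpa.map_add g' 0 (hpa.zero_mem _) 0 (hpa.zero_mem _)
    rw [add_zero] at h
    exact (left_eq_add.mp h)
  have hfne : θ g e ≠ 0 := by
    intro h
    have h0 : e = 0 := hpa.injOn g hei (hpa.zero_mem _) (by rw [h, hθ0 g])
    exact h01 (by simpa [he] using congrFun h0 i)
  obtain ⟨j, hj⟩ : ∃ j, θ g e j = 1 := by
    by_contra hno
    push_neg at hno
    apply hfne
    funext k
    rcases hcoord k with h | h
    · exact h
    · exact absurd h (hno k)
  refine ⟨j, funext fun k => ?_⟩
  by_cases hkj : k = j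
  · subst hkj; rw [Pi.single_eq_same]; exact hj
  · rw [Pi.single_eq_of_ne hkj]
    rcases hcoord k with h | h
    · exact h
    exfalso
    set u : Fin n → Λ := Pi.single j 1 with hu
    have huf : u * θ g e = u := by
      funext m
      by_cases hm : m = j
      · subst hm
        show u m * θ g e m = u m
        rw [hu, Pi.single_eq_same, hj, one_mul]
      · show u m * θ g e m = u m
        rw [hu, Pi.single_eq_of_ne hm, zero_mul]
    have hu_mem : u ∈ S g := huf ▸ hpa.mul_mem_right g (θ g e) u
      (huf ▸ hpa.mul_mem_left g u (θ g e) hf_mem)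
    have hu_mem' : u ∈ S g⁻¹⁻¹ := by rwa [inv_inv]
    have ha_cent := cent_aux hpa g⁻¹ hu_mem' (hsingle_idem j) (hsingle_cent j)
    have ha_mem : θ g⁻¹ u ∈ S g⁻¹ := hpa.maps_to g⁻¹ u hu_mem'
    set a : Fin n → Λ := θ g⁻¹ u with hadef
    have hgau : θ g a = u := by
      have h2 := hpa.comp g g⁻¹ u hu_mem' ⟨ha_mem, ha_mem⟩
      rw [hadef, h2, mul_inv_cancel, hpa.one_act]
    have hae : a * e = a := by
      apply hpa.injOn g (hpa.mul_mem_right g⁻¹ e a ha_mem) ha_mem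
      rw [hpa.map_mul g a ha_mem e hei, hgau]
      exact huf
    have haa : a * a = a := by
      apply hpa.injOn g (hpa.mul_mem_right g⁻¹ a a ha_mem) ha_mem
      rw [hpa.map_mul g a ha_mem a ha_mem, hgau]
      exact hsingle_idem j
    have hai : a i = 0 ∨ a i = 1 := by
      apply hindec
      · exact congrFun haa i
      · intro x; exact congrFun (ha_cent (fun _ => x)) i
    have ha_single : a = Pi.single i (a i) := by
      funext m
      by_cases hm : m = i
      · subst hm; rw [Pi.single_eq_same]
      · rw [Pi.single_eq_of_ne hm]
        calc a m = a m * e m := (congrFun hae m).symm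
          _ = a m * 0 := by rw [he, Pi.single_eq_of_ne hm]
          _ = 0 := mul_zero _
    rcases hai with h0 | h1
    · have hz : a = 0 := by rw [ha_single, h0, Pi.single_zero]
      have hu0 : u = 0 := by rw [← hgau, hz, hθ0 g]
      have hj1 := congrFun hu0 j
      rw [hu, Pi.single_eq_same] at hj1
      exact h01 hj1
    · have hae' : a = e := by rw [ha_single, h1]
      have huf' : u = θ g e := by rw [← hgau, hae']
      have hk := congrFun huf' k
      rw [h, hu, Pi.single_eq_of_ne hkj] at hk
      exact h01 hk.symm
end

section
/- Let Λ be a nonzero unital indecomposable R-algebra, n a positive integer, and let α and α' be partial actions of a group G on Λ^n whose enveloping algebras are isomorphic to Λ^m and Λ^{m'} respectively (finite products of copies of Λ). Assume that α and α' induce the same partial action on the set {e_1, …, e_n} of primitive central idempotents of Λ^n, i.e. for every g ∈ G, e_i ∈ S^α_{g⁻¹} if and only if e_i ∈ S^{α'}_{g⁻¹}, and α_g(e_i) = α'_g(e_i) for every such e_i. Then m = m'. -/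
section PartialActionAux

variable {R G Λ : Type*} [CommRing R] [Group G] [Ring Λ] [Algebra R Λ]
variable {n m : ℕ}
variable {S : G → Set (Fin n → Λ)} {θ : G → (Fin n → Λ) → (Fin n → Λ)}
variable {B : G → (Fin m → Λ) → (Fin m → Λ)} {ψ : (Fin n → Λ) → (Fin m → Λ)}

lemma pa_single_central {k : ℕ} (i : Fin k) (z : Fin k → Λ) :
    (Pi.single i 1 : Fin k → Λ) * z = z * Pi.single i 1 := by
  funext j
  simp only [Pi.mul_apply, Pi.single_apply]
  split_ifs <;> simp

lemma pa_single_idem {k : ℕ} (i : Fin k) :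
    (Pi.single i 1 : Fin k → Λ) * Pi.single i 1 = Pi.single i 1 := by
  funext j
  simp only [Pi.mul_apply, Pi.single_apply]
  split_ifs <;> simp

lemma pa_single_inj {k : ℕ} [Nontrivial Λ] {i j : Fin k}
    (h : (Pi.single i 1 : Fin k → Λ) = Pi.single j 1) : i = j := by
  by_contra hij
  have := congrFun h i
  rw [Pi.single_eq_same, Pi.single_apply] at this
  simp [hij] at this

variable (henv : IsEnvelopingAction R G (Fin n → Λ) (Fin m → Λ) S θ B ψ)

include henv

lemma pa_psi_zero : ψ 0 = 0 := by
  have h := henv.φ_add 0 0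
  rw [add_zero] at h
  exact left_eq_add.mp h

lemma pa_B_zero (g : G) : B g 0 = 0 := by
  have h := henv.β_add g 0 0
  rw [add_zero] at h
  exact left_eq_add.mp h

lemma pa_B_inj (g : G) : Function.Injective (B g) := (henv.β_bijective g).1

lemma pa_B_Binv (g : G) (x : Fin m → Λ) : B g (B g⁻¹ x) = x := by
  rw [henv.β_comp, mul_inv_cancel, henv.β_one]

lemma pa_psi_e_central (i : Fin n) (z : Fin m → Λ) :
    ψ (Pi.single i 1) * z = z * ψ (Pi.single i 1) := by
  obtain ⟨x, hx⟩ := henv.ideal_mul_right z (ψ (Pi.single i 1)) ⟨_, rfl⟩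
  obtain ⟨y, hy⟩ := henv.ideal_mul_left z (ψ (Pi.single i 1)) ⟨_, rfl⟩
  have huu : ψ (Pi.single i 1) * ψ (Pi.single i 1) = ψ (Pi.single i 1) := by
    rw [← henv.φ_mul, pa_single_idem]
  have hx1 : Pi.single i (1:Λ) * x = x := henv.φ_injective (by
    rw [henv.φ_mul, hx, ← mul_assoc, huu])
  have hy1 : y * Pi.single i (1:Λ) = y := henv.φ_injective (by
    rw [henv.φ_mul, hy, mul_assoc, huu])
  have hxy : x * Pi.single i (1:Λ) = Pi.single i 1 * y := henv.φ_injective (by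
    rw [henv.φ_mul, henv.φ_mul, hx, hy, mul_assoc])
  have hxeq : x = y := by
    calc x = Pi.single i 1 * x := hx1.symm
    _ = x * Pi.single i 1 := pa_single_central i x
    _ = Pi.single i 1 * y := hxy
    _ = y * Pi.single i 1 := pa_single_central i y
    _ = y := hy1
  rw [← hx, hxeq, hy]

lemma pa_u_central (g : G) (i : Fin n) (z : Fin m → Λ) :
    B g (ψ (Pi.single i 1)) * z = z * B g (ψ (Pi.single i 1)) := by
  conv_lhs => rw [← pa_B_Binv henv g z]
  conv_rhs => rw [← pa_B_Binv henv g z]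
  rw [← henv.β_mul, ← henv.β_mul, pa_psi_e_central henv]

lemma pa_u_idem (g : G) (i : Fin n) :
    B g (ψ (Pi.single i 1)) * B g (ψ (Pi.single i 1)) = B g (ψ (Pi.single i 1)) := by
  rw [← henv.β_mul, ← henv.φ_mul, pa_single_idem]

lemma pa_u_ne [Nontrivial Λ] (g : G) (i : Fin n) : B g (ψ (Pi.single i 1)) ≠ 0 := by
  intro h
  have h1 : ψ (Pi.single i 1) = 0 := pa_B_inj henv g (h.trans (pa_B_zero henv g).symm)
  have h2 : Pi.single i (1:Λ) = 0 := henv.φ_injective (h1.trans (pa_psi_zero henv).symm)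
  have h3 := congrFun h2 i
  rw [Pi.single_eq_same] at h3
  exact one_ne_zero h3

/-- A central idempotent below `B g (ψ eᵢ)` is `0` or everything. -/
lemma pa_prim_aux (hindec : ∀ a : Λ, a * a = a → (∀ x : Λ, a * x = x * a) → a = 0 ∨ a = 1)
    (g : G) (i : Fin n) {c : Fin m → Λ} (hidem : c * c = c)
    (hcent : ∀ z, c * z = z * c) (hle : c * B g (ψ (Pi.single i 1)) = c) :
    c = 0 ∨ c = B g (ψ (Pi.single i 1)) := by
  set v := B g⁻¹ c with hv
  have hvB : B g v = c := pa_B_Binv henv g c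
  have hBinj := pa_B_inj henv g
  have hvcent : ∀ w, v * w = w * v := by
    intro w
    apply hBinj
    rw [henv.β_mul, henv.β_mul, hvB, hcent (B g w)]
  have hvu : v * ψ (Pi.single i 1) = v := by
    apply hBinj
    rw [henv.β_mul, hvB, hle]
  have hvr : v ∈ Set.range ψ := by
    rw [← hvu]
    exact henv.ideal_mul_left v _ ⟨_, rfl⟩
  obtain ⟨w, hw⟩ := hvr
  have hwe : w * Pi.single i 1 = w := henv.φ_injective (by rw [henv.φ_mul, hw, hvu])
  have hwcent : ∀ a, w * a = a * w := fun a => henv.φ_injective (by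
    rw [henv.φ_mul, henv.φ_mul, hw, hvcent])
  have hvidem : v * v = v := hBinj (by rw [henv.β_mul, hvB, hidem])
  have hwidem : w * w = w := henv.φ_injective (by rw [henv.φ_mul, hw, hvidem])
  have hws : w = Pi.single i (w i) := by
    funext j
    rcases eq_or_ne j i with hj | hj
    · subst hj; rw [Pi.single_eq_same]
    · have h1 := congrFun hwe j
      rw [Pi.mul_apply, Pi.single_apply, if_neg hj, mul_zero] at h1
      rw [Pi.single_apply, if_neg hj, ← h1]
  have hwi := hindec (w i) (congrFun hwidem i) (fun x => congrFun (hwcent (fun _ => x)) i)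
  rcases hwi with h0 | h1
  · left
    rw [← hvB, ← hw, hws, h0]
    have : (Pi.single i (0:Λ)) = (0 : Fin n → Λ) := Pi.single_zero i
    rw [this, pa_psi_zero henv, pa_B_zero henv]
  · right
    rw [← hvB, ← hw, hws, h1]

lemma pa_prim_single [Nontrivial Λ]
    (hindec : ∀ a : Λ, a * a = a → (∀ x : Λ, a * x = x * a) → a = 0 ∨ a = 1)
    (g : G) (i : Fin n) : ∃ j : Fin m, B g (ψ (Pi.single i 1)) = Pi.single j 1 := by
  set u := B g (ψ (Pi.single i 1)) with hu
  have hcoord : ∀ j, u j = 0 ∨ u j = 1 := fun j =>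
    hindec (u j) (congrFun (pa_u_idem henv g i) j)
      (fun x => congrFun (pa_u_central henv g i (fun _ => x)) j)
  have hne := pa_u_ne henv g i
  have hex : ∃ j0, u j0 = 1 := by
    by_contra hcon
    push_neg at hcon
    apply hne
    funext j
    rcases hcoord j with h | h
    · exact h
    · exact absurd h (hcon j)
  obtain ⟨j0, hj0⟩ := hex
  refine ⟨j0, ?_⟩
  have hcu : Pi.single j0 (1:Λ) * u = Pi.single j0 1 := by
    funext j
    rcases eq_or_ne j j0 with hj | hj
    · subst hj
      rw [Pi.mul_apply, Pi.single_eq_same, hj0, mul_one]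
    · rw [Pi.mul_apply, Pi.single_apply, if_neg hj, zero_mul]
  have := pa_prim_aux henv hindec g i (c := Pi.single j0 1) (pa_single_idem j0)
    (fun z => pa_single_central j0 z) (by rw [← hu]; exact hcu)
  rcases this with h0 | h1
  · exfalso
    have := congrFun h0 j0
    rw [Pi.single_eq_same] at this
    simp at this
  · exact h1.symm

lemma pa_cover [Nontrivial Λ]
    (hindec : ∀ a : Λ, a * a = a → (∀ x : Λ, a * x = x * a) → a = 0 ∨ a = 1)
    (j : Fin m) : ∃ (g : G) (i : Fin n), B g (ψ (Pi.single i 1)) = Pi.single j 1 := by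
  by_contra hcon
  push_neg at hcon
  have hzero : ∀ (g : G) (i : Fin n), B g (ψ (Pi.single i 1)) j = 0 := by
    intro g i
    obtain ⟨j', hj'⟩ := pa_prim_single henv hindec g i
    have hjj : j ≠ j' := by
      rintro rfl
      exact hcon g i hj'
    rw [hj', Pi.single_apply, if_neg hjj]
  set K : AddSubmonoid (Fin m → Λ) :=
    { carrier := {z | z j = 0}
      zero_mem' := rfl
      add_mem' := by
        intro a b ha hb
        show (a + b) j = 0
        rw [Pi.add_apply, ha, hb, add_zero] } with hK
  have hsub : (⋃ g : G, B g '' Set.range ψ) ⊆ ↑K := by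
    rintro z hz
    simp only [Set.mem_iUnion, Set.mem_image, Set.mem_range] at hz
    obtain ⟨g, x, ⟨a, rfl⟩, rfl⟩ := hz
    show B g (ψ a) j = 0
    let Ψ : (Fin n → Λ) →+ (Fin m → Λ) := AddMonoidHom.mk' ψ henv.φ_add
    let Bg : (Fin m → Λ) →+ (Fin m → Λ) := AddMonoidHom.mk' (B g) (henv.β_add g)
    have hone : (∑ i, Pi.single i 1 : Fin n → Λ) = 1 := Finset.univ_sum_single 1
    have ha : a = ∑ i, Pi.single i (1:Λ) * a := by
      rw [← Finset.sum_mul, hone, one_mul]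
    have : B g (ψ a) = ∑ i, B g (ψ (Pi.single i 1)) * B g (ψ a) := by
      conv_lhs => rw [ha]
      show Bg (Ψ (∑ i, Pi.single i (1:Λ) * a)) = _
      rw [map_sum, map_sum]
      refine Finset.sum_congr rfl fun i _ => ?_
      show B g (ψ (Pi.single i 1 * a)) = _
      rw [henv.φ_mul, henv.β_mul]
    rw [this, Finset.sum_apply]
    refine Finset.sum_eq_zero fun i _ => ?_
    rw [Pi.mul_apply, hzero g i, zero_mul]
  have hle : AddSubmonoid.closure (⋃ g : G, B g '' Set.range ψ) ≤ K :=
    AddSubmonoid.closure_le.mpr hsub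
  rw [henv.spans] at hle
  have h0 : (Pi.single j 1 : Fin m → Λ) ∈ K := hle (AddSubmonoid.mem_top _)
  have h1 : (Pi.single j 1 : Fin m → Λ) j = 0 := h0
  rw [Pi.single_eq_same] at h1
  exact one_ne_zero h1

lemma pa_char (hpa : IsPartialAction R G (Fin n → Λ) S θ) (g h : G) (i l : Fin n) :
    B g (ψ (Pi.single i 1)) = B h (ψ (Pi.single l 1)) ↔
      (Pi.single i (1:Λ) ∈ S ((h⁻¹ * g)⁻¹) ∧
        θ (h⁻¹ * g) (Pi.single i 1) = Pi.single l 1) := by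
  constructor
  · intro heq
    have hk : B (h⁻¹ * g) (ψ (Pi.single i 1)) = ψ (Pi.single l 1) := by
      have h2 := congrArg (B h⁻¹) heq
      rw [henv.β_comp, henv.β_comp, inv_mul_cancel, henv.β_one] at h2
      exact h2
    have hmem : ψ (Pi.single l 1) ∈ ψ '' S (h⁻¹ * g) := by
      rw [henv.intersect]
      exact ⟨⟨_, rfl⟩, ⟨ψ (Pi.single i 1), ⟨_, rfl⟩, hk⟩⟩
    obtain ⟨x, hxS, hxeq⟩ := hmem
    have hxl : x = Pi.single l 1 := henv.φ_injective hxeq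
    rw [hxl] at hxS
    obtain ⟨y, hyS, hyeq⟩ := hpa.surjOn (h⁻¹ * g) hxS
    have heqv := henv.equivariant (h⁻¹ * g) y hyS
    rw [hyeq] at heqv
    have hyi : y = Pi.single i 1 := henv.φ_injective (pa_B_inj henv (h⁻¹ * g) (by rw [← heqv, hk]))
    rw [hyi] at hyS hyeq
    exact ⟨hyS, hyeq⟩
  · rintro ⟨hmem, hth⟩
    have heqv := henv.equivariant (h⁻¹ * g) _ hmem
    rw [hth] at heqv
    have h2 : B h (ψ (Pi.single l 1)) = B h (B (h⁻¹ * g) (ψ (Pi.single i 1))) :=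
      congrArg (B h) heqv
    rw [henv.β_comp, mul_inv_cancel_left] at h2
    exact h2.symm

end PartialActionAux

section Transport

variable {R G Λ : Type*} [CommRing R] [Group G] [Ring Λ] [Algebra R Λ]
variable {n m : ℕ}
variable {S : G → Set (Fin n → Λ)} {θ : G → (Fin n → Λ) → (Fin n → Λ)}

lemma pa_transport {L : Type*} [NonUnitalNonAssocSemiring L] [Module R L]
    {β : G → L → L} {φ : (Fin n → Λ) → L}
    (E : IsEnvelopingAction R G (Fin n → Λ) L S θ β φ)
    (F : L ≃ (Fin m → Λ))
    (hFa : ∀ x y : L, F (x + y) = F x + F y)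
    (hFm : ∀ x y : L, F (x * y) = F x * F y)
    (hFs : ∀ (r : R) (x : L), F (r • x) = r • F x) :
    IsEnvelopingAction R G (Fin n → Λ) (Fin m → Λ) S θ
      (fun g z => F (β g (F.symm z))) (fun a => F (φ a)) := by
  have hsa : ∀ x y : Fin m → Λ, F.symm (x + y) = F.symm x + F.symm y := by
    intro x y
    apply F.injective
    rw [hFa, F.apply_symm_apply, F.apply_symm_apply, F.apply_symm_apply]
  have hsm : ∀ x y : Fin m → Λ, F.symm (x * y) = F.symm x * F.symm y := by
    intro x y
    apply F.injective
    rw [hFm, F.apply_symm_apply, F.apply_symm_apply, F.apply_symm_apply]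
  have hss : ∀ (r : R) (x : Fin m → Λ), F.symm (r • x) = r • F.symm x := by
    intro r x
    apply F.injective
    rw [hFs, F.apply_symm_apply, F.apply_symm_apply]
  refine ⟨?_, ?_, ?_, ?_, ?_, ?_, ?_, ?_, ?_, ?_, ?_, ?_, ?_, ?_, ?_⟩
  · intro x; rw [E.β_one, F.apply_symm_apply]
  · intro g h x; rw [F.symm_apply_apply, E.β_comp]
  · intro g x y; rw [hsa, E.β_add, hFa]
  · intro g x y; rw [hsm, E.β_mul, hFm]
  · intro g r x; rw [hss, E.β_smul, hFs]
  · intro g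
    exact F.bijective.comp ((E.β_bijective g).comp F.symm.bijective)
  · exact fun a b hab => E.φ_injective (F.injective hab)
  · intro x y; rw [E.φ_add, hFa]
  · intro x y; rw [E.φ_mul, hFm]
  · intro r x; rw [E.φ_smul, hFs]
  · rintro a x ⟨w, rfl⟩
    obtain ⟨y, hy⟩ := E.ideal_mul_left (F.symm a) (φ w) ⟨w, rfl⟩
    refine ⟨y, ?_⟩
    show F (φ y) = _
    rw [hy, hFm, F.apply_symm_apply]
  · rintro a x ⟨w, rfl⟩
    obtain ⟨y, hy⟩ := E.ideal_mul_right (F.symm a) (φ w) ⟨w, rfl⟩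
    refine ⟨y, ?_⟩
    show F (φ y) = _
    rw [hy, hFm, F.apply_symm_apply]
  · rw [eq_top_iff]
    rintro z -
    have hz : F.symm z ∈ AddSubmonoid.closure (⋃ g : G, β g '' Set.range φ) := by
      rw [E.spans]; exact AddSubmonoid.mem_top _
    have hF0 : F 0 = 0 := by
      have h := hFa 0 0
      rw [add_zero] at h
      exact left_eq_add.mp h
    have key : ∀ x ∈ AddSubmonoid.closure (⋃ g : G, β g '' Set.range φ),
        F x ∈ AddSubmonoid.closure
          (⋃ g : G, (fun z => F (β g (F.symm z))) '' Set.range (fun a => F (φ a))) := by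
      intro x hx
      refine AddSubmonoid.closure_induction ?_ ?_ ?_ hx
      · intro y hy
        simp only [Set.mem_iUnion, Set.mem_image, Set.mem_range] at hy
        obtain ⟨g, w, ⟨a, rfl⟩, rfl⟩ := hy
        apply AddSubmonoid.subset_closure
        simp only [Set.mem_iUnion, Set.mem_image, Set.mem_range]
        exact ⟨g, F (φ a), ⟨a, rfl⟩, by rw [F.symm_apply_apply]⟩
      · rw [hF0]; exact AddSubmonoid.zero_mem _
      · intro a b ha hb iha ihb
        rw [hFa]; exact AddSubmonoid.add_mem _ iha ihb
    have h2 := key _ hz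
    rw [F.apply_symm_apply] at h2
    exact h2
  · intro g
    have h1 : (fun a => F (φ a)) '' S g = F '' (φ '' S g) := by
      rw [Set.image_image]
    rw [h1, E.intersect g, Set.image_inter F.injective]
    congr 1
    · ext z
      simp only [Set.mem_image, Set.mem_range]
      constructor
      · rintro ⟨w, ⟨a, rfl⟩, rfl⟩; exact ⟨a, rfl⟩
      · rintro ⟨a, rfl⟩; exact ⟨φ a, ⟨a, rfl⟩, rfl⟩
    · ext z
      simp only [Set.mem_image, Set.mem_range]
      constructor
      · rintro ⟨w, ⟨y, ⟨a, rfl⟩, rfl⟩, rfl⟩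
        exact ⟨F (φ a), ⟨a, rfl⟩, by rw [F.symm_apply_apply]⟩
      · rintro ⟨y, ⟨a, rfl⟩, rfl⟩
        exact ⟨β g (φ a), ⟨φ a, ⟨a, rfl⟩, rfl⟩, by rw [F.symm_apply_apply]⟩
  · intro g a ha
    rw [E.equivariant g a ha, F.symm_apply_apply]

end Transport

/-- Let `Λ` be a nonzero unital indecomposable `R`-algebra and
let `α`, `α'` be partial actions of `G` on `Λ^n` whose enveloping algebras are
isomorphic to `Λ^m` and `Λ^{m'}` respectively. If `α` and `α'` induce the same
partial action on the set of primitive central idempotents `{e_1, …, e_n}`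
(where `e_i = Pi.single i 1`), then `m = m'`. -/
theorem statement13 {R G Λ L L' : Type*} [CommRing R] [Group G]
    [Ring Λ] [Algebra R Λ] [Nontrivial Λ]
    [NonUnitalNonAssocSemiring L] [Module R L]
    [NonUnitalNonAssocSemiring L'] [Module R L']
    (hindec : ∀ a : Λ, a * a = a → (∀ x : Λ, a * x = x * a) → a = 0 ∨ a = 1)
    (n : ℕ) (hn : 0 < n)
    (S : G → Set (Fin n → Λ)) (θ : G → (Fin n → Λ) → (Fin n → Λ))
    (hpa : IsPartialAction R G (Fin n → Λ) S θ)
    (β : G → L → L) (φ : (Fin n → Λ) → L)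
    (henv : IsEnvelopingAction R G (Fin n → Λ) L S θ β φ)
    (m : ℕ) (F : L ≃ (Fin m → Λ))
    (hF : (∀ x y : L, F (x + y) = F x + F y) ∧
      (∀ x y : L, F (x * y) = F x * F y) ∧
      (∀ (r : R) (x : L), F (r • x) = r • F x))
    (S' : G → Set (Fin n → Λ)) (θ' : G → (Fin n → Λ) → (Fin n → Λ))
    (hpa' : IsPartialAction R G (Fin n → Λ) S' θ')
    (β' : G → L' → L') (φ' : (Fin n → Λ) → L')
    (henv' : IsEnvelopingAction R G (Fin n → Λ) L' S' θ' β' φ')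
    (m' : ℕ) (F' : L' ≃ (Fin m' → Λ))
    (hF' : (∀ x y : L', F' (x + y) = F' x + F' y) ∧
      (∀ x y : L', F' (x * y) = F' x * F' y) ∧
      (∀ (r : R) (x : L'), F' (r • x) = r • F' x))
    (hsame : ∀ (g : G) (i : Fin n),
      (Pi.single i (1 : Λ) ∈ S (g⁻¹) ↔ Pi.single i (1 : Λ) ∈ S' (g⁻¹)) ∧
      (Pi.single i (1 : Λ) ∈ S (g⁻¹) →
        θ g (Pi.single i (1 : Λ)) = θ' g (Pi.single i (1 : Λ)))) :
    m = m' := by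
  classical
  obtain ⟨hFa, hFm, hFs⟩ := hF
  obtain ⟨hFa', hFm', hFs'⟩ := hF'
  have E := pa_transport henv F hFa hFm hFs
  have E' := pa_transport henv' F' hFa' hFm' hFs'
  have mid : ∀ (g h : G) (i l : Fin n),
      (Pi.single i (1:Λ) ∈ S ((h⁻¹ * g)⁻¹) ∧
        θ (h⁻¹ * g) (Pi.single i 1) = Pi.single l 1) ↔
      (Pi.single i (1:Λ) ∈ S' ((h⁻¹ * g)⁻¹) ∧
        θ' (h⁻¹ * g) (Pi.single i 1) = Pi.single l 1) := by
    intro g h i l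
    constructor
    · rintro ⟨h1, h2⟩
      exact ⟨(hsame (h⁻¹ * g) i).1.mp h1, by
        rw [← (hsame (h⁻¹ * g) i).2 h1]; exact h2⟩
    · rintro ⟨h1, h2⟩
      have h1' := (hsame (h⁻¹ * g) i).1.mpr h1
      exact ⟨h1', by rw [(hsame (h⁻¹ * g) i).2 h1']; exact h2⟩
  have key := fun (g h : G) (i l : Fin n) =>
    ((pa_char E hpa g h i l).trans (mid g h i l)).trans (pa_char E' hpa' g h i l).symm
  have cov := fun j : Fin m => pa_cover E hindec j
  have cov' := fun j : Fin m' => pa_cover E' hindec j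
  choose gj ij hj using cov
  choose gj' ij' hj' using cov'
  have pr := fun j : Fin m => pa_prim_single E' hindec (gj j) (ij j)
  have pr' := fun j : Fin m' => pa_prim_single E hindec (gj' j) (ij' j)
  choose f hf using pr
  choose f' hf' using pr'
  have hleft : ∀ j : Fin m, f' (f j) = j := by
    intro j
    have h1 := (key (gj j) (gj' (f j)) (ij j) (ij' (f j))).mpr
      (by rw [hf j, hj' (f j)])
    rw [hj j, hf' (f j)] at h1
    exact (pa_single_inj h1).symm
  have hright : ∀ j : Fin m', f (f' j) = j := by
    intro j
    have h1 := (key (gj' j) (gj (f' j)) (ij' j) (ij (f' j))).mp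
      (by rw [hf' j, hj (f' j)])
    rw [hj' j, hf (f' j)] at h1
    exact (pa_single_inj h1).symm
  have e : Fin m ≃ Fin m' := ⟨f, f', hleft, hright⟩
  simpa using Fintype.card_congr e
end

section
/- Let K be a field, n a positive integer, Λ = K^n = ⨁_{i=1}^n K e_i, and G a group. Every partial action α of G on Λ by K-algebra isomorphisms restricts to a partial action on the finite set {e_1, …, e_n}: each ideal S_g equals ⨁_{e∈X_g} K e for a unique subset X_g ⊆ {e_1,…,e_n}, each α_g maps X_{g⁻¹} bijectively onto X_g, and the resulting data (X_g, α_g|_{X_{g⁻¹}}) is a partial action of G on the set {e_1,…,e_n}. Moreover, this restriction map is a bijection between the set of partial actions of G on Λ by K-algebra isomorphisms and the set of partial actions of G on {e_1,…,e_n}. -/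
/-- A partial action of a group `G` on a set `X`: subsets `Y g ⊆ X` together
with bijections `θ g : Y (g⁻¹) → Y g` (encoded as total maps normalized to be
the identity off the domain) satisfying the partial action axioms. -/
structure SetPartialAction (G : Type*) [Group G] (X : Type*) where
  Y : G → Set X
  act : G → X → X
  maps_to : ∀ g : G, ∀ x ∈ Y (g⁻¹), act g x ∈ Y g
  injOn : ∀ g : G, Set.InjOn (act g) (Y (g⁻¹))
  surjOn : ∀ g : G, Set.SurjOn (act g) (Y (g⁻¹)) (Y g)
  Y_one : Y (1 : G) = Set.univ
  one_act : ∀ x : X, act 1 x = x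
  dom_comp : ∀ g h : G, ∀ x ∈ Y (h⁻¹), act h x ∈ Y h ∩ Y (g⁻¹) → x ∈ Y ((g * h)⁻¹)
  comp : ∀ g h : G, ∀ x ∈ Y (h⁻¹), act h x ∈ Y h ∩ Y (g⁻¹) → act g (act h x) = act (g * h) x
  norm : ∀ g : G, ∀ x : X, x ∉ Y (g⁻¹) → act g x = x

/-- A partial action of a group `G` on the `K`-algebra `K^n` by `K`-algebra
isomorphisms (with the maps normalized to be `0` off their domains). -/
structure AlgebraPartialAction (K : Type*) [Field K] (G : Type*) [Group G] (n : ℕ) where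
  S : G → Set (Fin n → K)
  act : G → (Fin n → K) → (Fin n → K)
  isPartialAction : IsPartialAction K G (Fin n → K) S act
  norm : ∀ g : G, ∀ x : Fin n → K, x ∉ S (g⁻¹) → act g x = 0


namespace Statement15Aux

open Classical

variable {K : Type*} [Field K] {G : Type*} [Group G] {n : ℕ}

lemma single_one_injective {i j : Fin n}
    (h : (Pi.single i (1:K) : Fin n → K) = Pi.single j 1) : i = j := by
  by_contra hne
  have := congrFun h i
  simp [Pi.single_apply, hne] at this

lemma single_mul_single_ne {i j : Fin n} (h : i ≠ j) :
    (Pi.single i (1:K) : Fin n → K) * Pi.single j 1 = 0 := by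
  funext k
  simp [Pi.single_apply]
  intro h1 h2; exact absurd (h1 ▸ h2 ▸ rfl) h

lemma single_eq_smul (i : Fin n) (c : K) :
    (Pi.single i c : Fin n → K) = c • (Pi.single i (1:K) : Fin n → K) := by
  rw [← Pi.single_smul, smul_eq_mul, mul_one]

variable (A : AlgebraPartialAction K G n)

lemma act_zero (g : G) : A.act g 0 = 0 := by
  have h0 := A.isPartialAction.zero_mem g⁻¹
  have := A.isPartialAction.map_add g 0 h0 0 h0
  simpa using this.symm

lemma sum_mem {ι : Type*} (g : G) (s : Finset ι) (f : ι → (Fin n → K))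
    (h : ∀ i ∈ s, f i ∈ A.S g) : ∑ i ∈ s, f i ∈ A.S g := by
  classical
  induction s using Finset.induction_on with
  | empty => simpa using A.isPartialAction.zero_mem g
  | @insert a s hx ih =>
    rw [Finset.sum_insert hx]
    exact A.isPartialAction.add_mem g _ (h a (Finset.mem_insert_self a s)) _
      (ih fun i hi => h i (Finset.mem_insert_of_mem hi))

lemma act_sum {ι : Type*} (g : G) (s : Finset ι) (f : ι → (Fin n → K))
    (h : ∀ i ∈ s, f i ∈ A.S g⁻¹) :
    A.act g (∑ i ∈ s, f i) = ∑ i ∈ s, A.act g (f i) := by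
  classical
  induction s using Finset.induction_on with
  | empty => simpa using act_zero A g
  | @insert a s hx ih =>
    rw [Finset.sum_insert hx, Finset.sum_insert hx,
      A.isPartialAction.map_add g _ (h a (Finset.mem_insert_self a s)) _
        (sum_mem A g⁻¹ s f fun i hi => h i (Finset.mem_insert_of_mem hi)),
      ih fun i hi => h i (Finset.mem_insert_of_mem hi)]

lemma mem_S_iff (g : G) (x : Fin n → K) :
    x ∈ A.S g ↔ ∀ i : Fin n, (Pi.single i (1:K) : Fin n → K) ∉ A.S g → x i = 0 := by
  constructor
  · intro hx i hi
    by_contra hxi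
    apply hi
    have h1 : (Pi.single i (1:K) : Fin n → K) * x ∈ A.S g :=
      A.isPartialAction.mul_mem_left g _ x hx
    have h2 : (Pi.single i (1:K) : Fin n → K) * x = Pi.single i (x i) := by
      funext k
      by_cases hk : k = i
      · subst hk; simp [Pi.single_apply]
      · simp [Pi.single_apply, hk]
    rw [h2] at h1
    have h3 := A.isPartialAction.smul_mem g (x i)⁻¹ _ h1
    rw [single_eq_smul, ← smul_assoc, smul_eq_mul, inv_mul_cancel₀ hxi, one_smul] at h3
    exact h3
  · intro hx
    have : x = ∑ i, Pi.single i (x i) := (Finset.univ_sum_single x).symm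
    rw [this]
    apply sum_mem
    intro i _
    by_cases hi : (Pi.single i (1:K) : Fin n → K) ∈ A.S g
    · rw [single_eq_smul]
      exact A.isPartialAction.smul_mem g (x i) _ hi
    · rw [hx i hi]
      simpa using A.isPartialAction.zero_mem g

lemma inv_act_act (g : G) (x : Fin n → K) (hx : x ∈ A.S g⁻¹) :
    A.act g⁻¹ (A.act g x) = x := by
  have h := A.isPartialAction.comp g⁻¹ g x hx
    ⟨A.isPartialAction.maps_to g x hx, by
      rw [inv_inv]; exact A.isPartialAction.maps_to g x hx⟩
  rw [h, inv_mul_cancel, A.isPartialAction.one_act]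

lemma act_inv_act (g : G) (x : Fin n → K) (hx : x ∈ A.S g) :
    A.act g (A.act g⁻¹ x) = x := by
  have := inv_act_act A g⁻¹ x (by rw [inv_inv]; exact hx)
  rwa [inv_inv] at this


lemma exists_single_eq (g : G) (i : Fin n)
    (hi : (Pi.single i (1:K) : Fin n → K) ∈ A.S g⁻¹) :
    ∃ j : Fin n, A.act g (Pi.single i (1:K)) = Pi.single j 1 := by
  classical
  set u := A.act g (Pi.single i (1:K)) with hu
  have humem : u ∈ A.S g := A.isPartialAction.maps_to g _ hi
  -- u is idempotent
  have hidem : u * u = u := by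
    have := A.isPartialAction.map_mul g _ hi _ hi
    rw [← Pi.single_mul, one_mul] at this
    exact this.symm
  -- u ≠ 0
  have hune : u ≠ 0 := by
    intro h0
    have h1 := inv_act_act A g _ hi
    rw [← hu, h0, act_zero] at h1
    have := congrFun h1 i
    simp at this
  -- pieces of u
  have hsingle_mem : ∀ j : Fin n, (Pi.single j (u j) : Fin n → K) ∈ A.S g := by
    intro j
    rw [mem_S_iff]
    intro k hk
    by_cases hkj : k = j
    · subst hkj
      simp only [Pi.single_eq_same]
      exact (mem_S_iff A g u).mp humem k hk
    · simp [Pi.single_apply, hkj]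
  set w : Fin n → (Fin n → K) := fun j => A.act g⁻¹ (Pi.single j (u j)) with hw
  have hwmem : ∀ j, (Pi.single j (u j) : Fin n → K) ∈ A.S (g⁻¹)⁻¹ := by
    intro j; rw [inv_inv]; exact hsingle_mem j
  have hsum : ∑ j, w j = Pi.single i (1:K) := by
    have h1 : (∑ j, Pi.single j (u j)) = u := Finset.univ_sum_single u
    have h2 : A.act g⁻¹ u = Pi.single i (1:K) := inv_act_act A g _ hi
    rw [← h2, ← h1, act_sum A g⁻¹ _ _ (fun j _ => hwmem j)]
  have hwzero : ∀ j, u j = 0 → w j = 0 := by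
    intro j hj
    rw [hw]; simp only [hj]
    have : (Pi.single j (0:K) : Fin n → K) = 0 := by simp
    rw [this, act_zero]
  have hwne : ∀ j, u j ≠ 0 → w j ≠ 0 := by
    intro j hj h0
    have h1 : A.act g (w j) = Pi.single j (u j) := act_inv_act A g _ (hsingle_mem j)
    rw [h0, act_zero] at h1
    have := congrFun h1 j
    simp at this
    exact hj this.symm
  have horth : ∀ j k, j ≠ k → w j * w k = 0 := by
    intro j k hjk
    have := A.isPartialAction.map_mul g⁻¹ _ (hwmem j) _ (hwmem k)
    have hprod : (Pi.single j (u j) : Fin n → K) * Pi.single k (u k) = 0 := by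
      funext m
      by_cases hm : m = j
      · subst hm; simp [Pi.single_apply, Ne.symm hjk]
      · simp [Pi.single_apply, hm]
    rw [hprod, act_zero] at this
    exact this.symm
  -- coordinates of nonzero pieces are concentrated at i
  have hconc : ∀ j, u j ≠ 0 → ∀ c, w j c ≠ 0 → c = i := by
    intro j hj c hc
    have hsum_c : ∑ m, w m c = (Pi.single i (1:K) : Fin n → K) c := by
      rw [← hsum]; simp [Finset.sum_apply]
    have heval : ∑ m, w m c = w j c := by
      apply Finset.sum_eq_single_of_mem j (Finset.mem_univ j)
      intro m _ hm
      by_cases hum : u m = 0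
      · rw [hwzero m hum]; rfl
      · have := congrFun (horth m j hm) c
        simp only [Pi.mul_apply, Pi.zero_apply] at this
        exact (mul_eq_zero.mp this).resolve_right hc
    rw [heval] at hsum_c
    by_contra hci
    rw [Pi.single_apply, if_neg hci] at hsum_c
    exact hc hsum_c
  -- at most one nonzero coordinate of u
  have huniq : ∀ j k, u j ≠ 0 → u k ≠ 0 → j = k := by
    intro j k hj hk
    by_contra hjk
    obtain ⟨c, hc⟩ : ∃ c, w j c ≠ 0 := by
      by_contra h
      push_neg at h
      exact hwne j hj (funext fun c => h c)
    obtain ⟨d, hd⟩ : ∃ d, w k d ≠ 0 := by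
      by_contra h
      push_neg at h
      exact hwne k hk (funext fun d => h d)
    have hci : c = i := hconc j hj c hc
    have hdi : d = i := hconc k hk d hd
    rw [hci] at hc; rw [hdi] at hd
    have := congrFun (horth j k hjk) i
    simp only [Pi.mul_apply, Pi.zero_apply] at this
    rcases mul_eq_zero.mp this with h | h
    · exact hc h
    · exact hd h
  obtain ⟨j0, hj0⟩ : ∃ j0, u j0 ≠ 0 := by
    by_contra h
    push_neg at h
    exact hune (funext fun j => h j)
  have huval : u j0 = 1 := by
    have := congrFun hidem j0
    simp only [Pi.mul_apply] at this
    exact mul_left_cancel₀ hj0 (by rw [this, mul_one])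
  refine ⟨j0, ?_⟩
  funext k
  by_cases hk : k = j0
  · subst hk; simp [huval]
  · have : u k = 0 := by
      by_contra h
      exact hk (huniq k j0 h hj0)
    simp [Pi.single_apply, hk, this]


noncomputable def sigma (g : G) (i : Fin n) : Fin n :=
  if h : (Pi.single i (1:K) : Fin n → K) ∈ A.S g⁻¹ then (exists_single_eq A g i h).choose
  else i

lemma act_single (g : G) (i : Fin n)
    (hi : (Pi.single i (1:K) : Fin n → K) ∈ A.S g⁻¹) :
    A.act g (Pi.single i (1:K)) = Pi.single (sigma A g i) 1 := by
  rw [sigma, dif_pos hi]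
  exact (exists_single_eq A g i hi).choose_spec

lemma sigma_eq_of (g : G) (i j : Fin n)
    (hi : (Pi.single i (1:K) : Fin n → K) ∈ A.S g⁻¹)
    (h : A.act g (Pi.single i (1:K)) = Pi.single j 1) : sigma A g i = j := by
  apply single_one_injective (K := K)
  rw [← act_single A g i hi, h]

lemma sigma_mem (g : G) (i : Fin n)
    (hi : (Pi.single i (1:K) : Fin n → K) ∈ A.S g⁻¹) :
    (Pi.single (sigma A g i) (1:K) : Fin n → K) ∈ A.S g := by
  rw [← act_single A g i hi]
  exact A.isPartialAction.maps_to g _ hi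

lemma sigma_inv_sigma (g : G) (i : Fin n)
    (hi : (Pi.single i (1:K) : Fin n → K) ∈ A.S g⁻¹) :
    sigma A g⁻¹ (sigma A g i) = i := by
  apply sigma_eq_of
  · rw [inv_inv]; exact sigma_mem A g i hi
  · rw [← act_single A g i hi]
    exact inv_act_act A g _ hi

lemma sigma_inv_mem (g : G) (j : Fin n)
    (hj : (Pi.single j (1:K) : Fin n → K) ∈ A.S g) :
    (Pi.single (sigma A g⁻¹ j) (1:K) : Fin n → K) ∈ A.S g⁻¹ := by
  have := sigma_mem A g⁻¹ j (by rw [inv_inv]; exact hj)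
  exact this

lemma sigma_sigma_inv (g : G) (j : Fin n)
    (hj : (Pi.single j (1:K) : Fin n → K) ∈ A.S g) :
    sigma A g (sigma A g⁻¹ j) = j := by
  have := sigma_inv_sigma A g⁻¹ j (by rw [inv_inv]; exact hj)
  rwa [inv_inv] at this

lemma act_inv_single (g : G) (j : Fin n)
    (hj : (Pi.single j (1:K) : Fin n → K) ∈ A.S g) :
    A.act g⁻¹ (Pi.single j (1:K)) = Pi.single (sigma A g⁻¹ j) 1 :=
  act_single A g⁻¹ j (by rw [inv_inv]; exact hj)

/-- The forward map: restriction of an algebra partial action to the idempotents. -/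
noncomputable def toSet (A : AlgebraPartialAction K G n) : SetPartialAction G (Fin n) where
  Y g := {i | (Pi.single i (1:K) : Fin n → K) ∈ A.S g}
  act g := sigma A g
  maps_to g i hi := sigma_mem A g i hi
  injOn g i hi i' hi' h := by
    have h' : sigma A g i = sigma A g i' := h
    have : sigma A g⁻¹ (sigma A g i) = sigma A g⁻¹ (sigma A g i') := by rw [h']
    rwa [sigma_inv_sigma A g i hi, sigma_inv_sigma A g i' hi'] at this
  surjOn g j hj := ⟨sigma A g⁻¹ j, sigma_inv_mem A g j hj, sigma_sigma_inv A g j hj⟩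
  Y_one := by
    apply Set.eq_univ_of_forall
    intro i
    simp only [Set.mem_setOf_eq, A.isPartialAction.S_one]
    trivial
  one_act i := by
    apply sigma_eq_of
    · rw [inv_one, A.isPartialAction.S_one]; trivial
    · exact A.isPartialAction.one_act _
  dom_comp g h i hi hmem := by
    have h1 := A.isPartialAction.dom_comp g h _ hi
      (by rw [act_single A h i hi]; exact hmem)
    exact h1
  comp g h i hi hmem := by
    have hσh : (Pi.single (sigma A h i) (1:K) : Fin n → K) ∈ A.S g⁻¹ := hmem.2
    have hgh : (Pi.single i (1:K) : Fin n → K) ∈ A.S (g*h)⁻¹ :=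
      A.isPartialAction.dom_comp g h _ hi (by rw [act_single A h i hi]; exact hmem)
    have h1 := A.isPartialAction.comp g h _ hi (by rw [act_single A h i hi]; exact hmem)
    rw [act_single A h i hi, act_single A g _ hσh, act_single A (g*h) i hgh] at h1
    exact single_one_injective (K := K) h1
  norm g i hi := by
    show sigma A g i = i
    have hi' : (Pi.single i (1:K) : Fin n → K) ∉ A.S g⁻¹ := hi
    rw [sigma, dif_neg hi']


section SetLemmas

variable (B : SetPartialAction G (Fin n))

lemma B_inv_act_act {g : G} {i : Fin n} (hi : i ∈ B.Y g⁻¹) :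
    B.act g⁻¹ (B.act g i) = i := by
  have h := B.comp g⁻¹ g i hi
    ⟨B.maps_to g i hi, by rw [inv_inv]; exact B.maps_to g i hi⟩
  rw [h, inv_mul_cancel, B.one_act]

lemma B_act_inv_act {g : G} {j : Fin n} (hj : j ∈ B.Y g) :
    B.act g (B.act g⁻¹ j) = j := by
  have := B_inv_act_act B (g := g⁻¹) (by rw [inv_inv]; exact hj)
  rwa [inv_inv] at this

lemma B_maps_to_inv {g : G} {j : Fin n} (hj : j ∈ B.Y g) :
    B.act g⁻¹ j ∈ B.Y g⁻¹ :=
  B.maps_to g⁻¹ j (by rw [inv_inv]; exact hj)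

end SetLemmas

open Classical in
/-- The underlying map of the backward construction. -/
noncomputable def bact (B : SetPartialAction G (Fin n)) (g : G) (x : Fin n → K) : Fin n → K :=
  if (∀ i : Fin n, i ∉ B.Y g⁻¹ → x i = 0) then
    (fun j => if j ∈ B.Y g then x (B.act g⁻¹ j) else 0)
  else 0

variable (B : SetPartialAction G (Fin n))

lemma bact_pos {g : G} {x : Fin n → K} (hx : ∀ i : Fin n, i ∉ B.Y g⁻¹ → x i = 0)
    {j : Fin n} (hj : j ∈ B.Y g) : bact (K := K) B g x j = x (B.act g⁻¹ j) := by
  rw [bact, if_pos hx, if_pos hj]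

lemma bact_neg {g : G} {x : Fin n → K} (hx : ∀ i : Fin n, i ∉ B.Y g⁻¹ → x i = 0)
    {j : Fin n} (hj : j ∉ B.Y g) : bact (K := K) B g x j = 0 := by
  rw [bact, if_pos hx, if_neg hj]

lemma bact_zero {g : G} {x : Fin n → K} (hx : ¬ (∀ i : Fin n, i ∉ B.Y g⁻¹ → x i = 0)) :
    bact (K := K) B g x = 0 := by
  rw [bact, if_neg hx]

lemma bact_apply_eq {g : G} {x : Fin n → K} (hx : ∀ i : Fin n, i ∉ B.Y g⁻¹ → x i = 0)
    {i : Fin n} (hi : i ∈ B.Y g⁻¹) : bact (K := K) B g x (B.act g i) = x i := by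
  rw [bact_pos B hx (B.maps_to g i hi), B_inv_act_act B hi]

/-- The backward map: spanning an algebra partial action from a set partial action. -/
noncomputable def toAlg (B : SetPartialAction G (Fin n)) : AlgebraPartialAction K G n where
  S g := {x | ∀ i : Fin n, i ∉ B.Y g → x i = 0}
  act := bact B
  isPartialAction := by
    constructor
    case zero_mem => intro g i _; rfl
    case add_mem =>
      intro g x hx y hy i hi
      simp only [Pi.add_apply, hx i hi, hy i hi, add_zero]
    case neg_mem =>
      intro g x hx i hi
      simp only [Pi.neg_apply, hx i hi, neg_zero]
    case smul_mem =>
      intro g r x hx i hi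
      simp only [Pi.smul_apply, hx i hi, smul_zero]
    case mul_mem_left =>
      intro g a x hx i hi
      simp only [Pi.mul_apply, hx i hi, mul_zero]
    case mul_mem_right =>
      intro g a x hx i hi
      simp only [Pi.mul_apply, hx i hi, zero_mul]
    case maps_to =>
      intro g x hx j hj
      exact bact_neg B hx hj
    case map_add =>
      intro g x hx y hy
      have hxy : ∀ i : Fin n, i ∉ B.Y g⁻¹ → (x + y) i = 0 := fun i hi => by
        simp only [Pi.add_apply, hx i hi, hy i hi, add_zero]
      funext j
      by_cases hj : j ∈ B.Y g
      · simp only [Pi.add_apply, bact_pos B hx hj, bact_pos B hy hj, bact_pos B hxy hj]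
      · simp only [Pi.add_apply, bact_neg B hx hj, bact_neg B hy hj, bact_neg B hxy hj, add_zero]
    case map_mul =>
      intro g x hx y hy
      have hxy : ∀ i : Fin n, i ∉ B.Y g⁻¹ → (x * y) i = 0 := fun i hi => by
        simp only [Pi.mul_apply, hx i hi, zero_mul]
      funext j
      by_cases hj : j ∈ B.Y g
      · simp only [Pi.mul_apply, bact_pos B hx hj, bact_pos B hy hj, bact_pos B hxy hj]
      · simp only [Pi.mul_apply, bact_neg B hx hj, bact_neg B hy hj, bact_neg B hxy hj, mul_zero]
    case map_smul =>
      intro g r x hx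
      have hrx : ∀ i : Fin n, i ∉ B.Y g⁻¹ → (r • x) i = 0 := fun i hi => by
        simp only [Pi.smul_apply, hx i hi, smul_zero]
      funext j
      by_cases hj : j ∈ B.Y g
      · simp only [Pi.smul_apply, bact_pos B hx hj, bact_pos B hrx hj]
      · simp only [Pi.smul_apply, bact_neg B hx hj, bact_neg B hrx hj, smul_zero]
    case injOn =>
      intro g x hx y hy hxy
      funext i
      by_cases hi : i ∈ B.Y g⁻¹
      · have h1 : bact (K := K) B g x (B.act g i) = x i := bact_apply_eq B hx hi
        have h2 : bact (K := K) B g y (B.act g i) = y i := bact_apply_eq B hy hi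
        rw [← h1, ← h2, hxy]
      · rw [hx i hi, hy i hi]
    case surjOn =>
      intro g y hy
      refine ⟨fun i => if i ∈ B.Y g⁻¹ then y (B.act g i) else 0, ?_, ?_⟩
      · intro i hi
        simp only [if_neg hi]
      · have hc : ∀ i : Fin n, i ∉ B.Y g⁻¹ →
            (fun i => if i ∈ B.Y g⁻¹ then y (B.act g i) else 0) i = 0 := by
          intro i hi; simp only [if_neg hi]
        funext j
        by_cases hj : j ∈ B.Y g
        · rw [bact_pos B hc hj]
          simp only [if_pos (B_maps_to_inv B hj), B_act_inv_act B hj]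
        · rw [bact_neg B hc hj, (hy j hj).symm]
    case S_one =>
      apply Set.eq_univ_of_forall
      intro x i hi
      rw [B.Y_one] at hi
      exact absurd (Set.mem_univ i) hi
    case one_act =>
      intro x
      have hc : ∀ i : Fin n, i ∉ B.Y (1:G)⁻¹ → x i = 0 := by
        intro i hi
        rw [inv_one, B.Y_one] at hi
        exact absurd (Set.mem_univ i) hi
      funext j
      have hj : j ∈ B.Y (1:G) := by rw [B.Y_one]; trivial
      rw [bact_pos B hc hj, inv_one, B.one_act]
    case dom_comp =>
      intro g h x hx hmem i hi
      by_contra hxi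
      have hiY : i ∈ B.Y h⁻¹ := by
        by_contra hc; exact hxi (hx i hc)
      have hj := B.maps_to h i hiY
      have hval : bact (K := K) B h x (B.act h i) ≠ 0 := by
        rw [bact_apply_eq B hx hiY]; exact hxi
      have hjg : B.act h i ∈ B.Y g⁻¹ := by
        by_contra hc
        exact hval (hmem.2 _ hc)
      exact hi (B.dom_comp g h i hiY ⟨hj, hjg⟩)
    case comp =>
      intro g h x hx hmem
      have hxgh : ∀ i : Fin n, i ∉ B.Y (g*h)⁻¹ → x i = 0 := by
        intro i hi
        by_contra hxi
        have hiY : i ∈ B.Y h⁻¹ := by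
          by_contra hc; exact hxi (hx i hc)
        have hj := B.maps_to h i hiY
        have hval : bact (K := K) B h x (B.act h i) ≠ 0 := by
          rw [bact_apply_eq B hx hiY]; exact hxi
        have hjg : B.act h i ∈ B.Y g⁻¹ := by
          by_contra hc
          exact hval (hmem.2 _ hc)
        exact hi (B.dom_comp g h i hiY ⟨hj, hjg⟩)
      have hθh : ∀ k : Fin n, k ∉ B.Y g⁻¹ → bact (K := K) B h x k = 0 :=
        fun k hk => hmem.2 k hk
      funext j
      by_cases hjg : j ∈ B.Y g
      · rw [bact_pos B hθh hjg]
        have hk : B.act g⁻¹ j ∈ B.Y g⁻¹ := B_maps_to_inv B hjg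
        by_cases hkh : B.act g⁻¹ j ∈ B.Y h
        · rw [bact_pos B hx hkh]
          set m := B.act h⁻¹ (B.act g⁻¹ j) with hm
          have hmY : m ∈ B.Y h⁻¹ := B_maps_to_inv B hkh
          have hact : B.act h m = B.act g⁻¹ j := B_act_inv_act B hkh
          have hmgh : m ∈ B.Y (g*h)⁻¹ :=
            B.dom_comp g h m hmY (by rw [hact]; exact ⟨hkh, hk⟩)
          have hcomp := B.comp g h m hmY (by rw [hact]; exact ⟨hkh, hk⟩)
          rw [hact, B_act_inv_act B hjg] at hcomp
          have hjgh : j ∈ B.Y (g*h) := hcomp ▸ B.maps_to (g*h) m hmgh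
          rw [bact_pos B hxgh hjgh]
          congr 1
          rw [hcomp, B_inv_act_act B hmgh]
        · rw [bact_neg B hx hkh]
          by_cases hjgh : j ∈ B.Y (g*h)
          · rw [bact_pos B hxgh hjgh]
            set m := B.act (g*h)⁻¹ j with hm
            have hmY : m ∈ B.Y (g*h)⁻¹ := B_maps_to_inv B hjgh
            by_contra hne
            have hxm : x m ≠ 0 := fun h0 => hne h0.symm
            have hmh : m ∈ B.Y h⁻¹ := by
              by_contra hc; exact hxm (hx m hc)
            have hval : bact (K := K) B h x (B.act h m) ≠ 0 := by
              rw [bact_apply_eq B hx hmh]; exact hxm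
            have hmg : B.act h m ∈ B.Y g⁻¹ := by
              by_contra hc
              exact hval (hmem.2 _ hc)
            have hcomp := B.comp g h m hmh ⟨B.maps_to h m hmh, hmg⟩
            have hghm : B.act (g*h) m = j := by
              rw [hm, B_act_inv_act B hjgh]
            rw [hghm] at hcomp
            have : B.act g⁻¹ j = B.act h m := by
              rw [← hcomp, B_inv_act_act B hmg]
            exact hkh (this ▸ B.maps_to h m hmh)
          · rw [bact_neg B hxgh hjgh]
      · rw [bact_neg B hθh hjg]
        by_cases hjgh : j ∈ B.Y (g*h)
        · rw [bact_pos B hxgh hjgh]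
          set m := B.act (g*h)⁻¹ j with hm
          have hmY : m ∈ B.Y (g*h)⁻¹ := B_maps_to_inv B hjgh
          by_contra hne
          have hxm : x m ≠ 0 := fun h0 => hne h0.symm
          have hmh : m ∈ B.Y h⁻¹ := by
            by_contra hc; exact hxm (hx m hc)
          have hval : bact (K := K) B h x (B.act h m) ≠ 0 := by
            rw [bact_apply_eq B hx hmh]; exact hxm
          have hmg : B.act h m ∈ B.Y g⁻¹ := by
            by_contra hc
            exact hval (hmem.2 _ hc)
          have hcomp := B.comp g h m hmh ⟨B.maps_to h m hmh, hmg⟩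
          have hghm : B.act (g*h) m = j := by
            rw [hm, B_act_inv_act B hjgh]
          rw [hghm] at hcomp
          exact absurd (hcomp ▸ B.maps_to g _ hmg) hjg
        · rw [bact_neg B hxgh hjgh]
  norm := by
    intro g x hx
    exact bact_zero B hx


lemma act_eq (g : G) (x : Fin n → K) (hx : x ∈ A.S g⁻¹) :
    A.act g x = fun j =>
      if (Pi.single j (1:K) : Fin n → K) ∈ A.S g then x (sigma A g⁻¹ j) else 0 := by
  classical
  have hterm : ∀ i : Fin n, (Pi.single i (x i) : Fin n → K) ∈ A.S g⁻¹ := by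
    intro i
    by_cases hi : (Pi.single i (1:K) : Fin n → K) ∈ A.S g⁻¹
    · rw [single_eq_smul]
      exact A.isPartialAction.smul_mem g⁻¹ (x i) _ hi
    · rw [(mem_S_iff A g⁻¹ x).mp hx i hi]
      have : (Pi.single i (0:K) : Fin n → K) = 0 := by simp
      rw [this]
      exact A.isPartialAction.zero_mem g⁻¹
  have hterm0 : ∀ i : Fin n, (Pi.single i (1:K) : Fin n → K) ∉ A.S g⁻¹ →
      A.act g (Pi.single i (x i)) = 0 := by
    intro i hi
    rw [(mem_S_iff A g⁻¹ x).mp hx i hi]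
    have : (Pi.single i (0:K) : Fin n → K) = 0 := by simp
    rw [this, act_zero]
  have hterm1 : ∀ i : Fin n, (Pi.single i (1:K) : Fin n → K) ∈ A.S g⁻¹ →
      A.act g (Pi.single i (x i)) = x i • (Pi.single (sigma A g i) (1:K) : Fin n → K) := by
    intro i hi
    rw [single_eq_smul, A.isPartialAction.map_smul g (x i) _ hi, act_single A g i hi]
  have hdecomp : A.act g x = ∑ i, A.act g (Pi.single i (x i)) := by
    conv_lhs => rw [← Finset.univ_sum_single x]
    exact act_sum A g _ _ fun i _ => hterm i
  rw [hdecomp]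
  funext j
  rw [Finset.sum_apply]
  by_cases hj : (Pi.single j (1:K) : Fin n → K) ∈ A.S g
  · rw [if_pos hj]
    rw [Finset.sum_eq_single (sigma A g⁻¹ j)]
    · have hi0 : (Pi.single (sigma A g⁻¹ j) (1:K) : Fin n → K) ∈ A.S g⁻¹ :=
        sigma_inv_mem A g j hj
      rw [hterm1 _ hi0, sigma_sigma_inv A g j hj]
      simp
    · intro i _ hne
      by_cases hi : (Pi.single i (1:K) : Fin n → K) ∈ A.S g⁻¹
      · rw [hterm1 i hi]
        have hσ : sigma A g i ≠ j := fun he => hne (by rw [← he, sigma_inv_sigma A g i hi])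
        simp [Pi.single_apply, hσ]
      · rw [hterm0 i hi]; rfl
    · intro h; exact absurd (Finset.mem_univ _) h
  · rw [if_neg hj]
    apply Finset.sum_eq_zero
    intro i _
    by_cases hi : (Pi.single i (1:K) : Fin n → K) ∈ A.S g⁻¹
    · rw [hterm1 i hi]
      have hσ : sigma A g i ≠ j := fun he => hj (he ▸ sigma_mem A g i hi)
      simp [Pi.single_apply, hσ]
    · rw [hterm0 i hi]; rfl

lemma algExt {A1 A2 : AlgebraPartialAction K G n} (hS : A1.S = A2.S)
    (ha : A1.act = A2.act) : A1 = A2 := by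
  cases A1; cases A2
  cases hS; cases ha; rfl

lemma setExt {B1 B2 : SetPartialAction G (Fin n)} (hY : B1.Y = B2.Y)
    (ha : B1.act = B2.act) : B1 = B2 := by
  cases B1; cases B2
  cases hY; cases ha; rfl

noncomputable def theEquiv : AlgebraPartialAction K G n ≃ SetPartialAction G (Fin n) where
  toFun := toSet
  invFun := toAlg
  left_inv A := by
    apply algExt
    · funext g
      ext x
      constructor
      · intro h
        exact (mem_S_iff A g x).mpr h
      · intro h
        exact (mem_S_iff A g x).mp h
    · funext g x
      show bact (toSet A) g x = A.act g x
      by_cases hx : x ∈ A.S g⁻¹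
      · have hx' : ∀ i : Fin n, i ∉ (toSet A).Y g⁻¹ → x i = 0 := fun i hi =>
          (mem_S_iff A g⁻¹ x).mp hx i hi
        rw [act_eq A g x hx]
        funext j
        by_cases hj : (Pi.single j (1:K) : Fin n → K) ∈ A.S g
        · rw [bact_pos (toSet A) hx' hj, if_pos hj]
          rfl
        · rw [bact_neg (toSet A) hx' hj, if_neg hj]
      · rw [A.norm g x hx, bact_zero]
        intro hc
        exact hx ((mem_S_iff A g⁻¹ x).mpr hc)
  right_inv B := by
    apply setExt
    · funext g
      ext i
      show (Pi.single i (1:K) : Fin n → K) ∈ (toAlg (K := K) B).S g ↔ i ∈ B.Y g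
      constructor
      · intro h
        by_contra hi
        have := h i hi
        simp at this
      · intro h k hk
        have hne : k ≠ i := fun he => hk (he ▸ h)
        simp [Pi.single_apply, hne]
    · funext g i
      show sigma (toAlg (K := K) B) g i = B.act g i
      by_cases hi : i ∈ B.Y g⁻¹
      · have hmem : ∀ k : Fin n, k ∉ B.Y g⁻¹ → (Pi.single i (1:K) : Fin n → K) k = 0 := by
          intro k hk
          have hne : k ≠ i := fun he => hk (he ▸ hi)
          simp [Pi.single_apply, hne]
        apply sigma_eq_of
        · exact hmem
        · show bact B g (Pi.single i (1:K)) = Pi.single (B.act g i) 1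
          funext j
          by_cases hj : j ∈ B.Y g
          · rw [bact_pos B hmem hj]
            by_cases hji : B.act g⁻¹ j = i
            · have hjact : j = B.act g i := by rw [← hji, B_act_inv_act B hj]
              simp [Pi.single_apply, hji, hjact, B_inv_act_act B hi]
            · have hjact : j ≠ B.act g i := fun he => hji (by rw [he, B_inv_act_act B hi])
              simp [Pi.single_apply, hji, hjact]
          · rw [bact_neg B hmem hj]
            have hjact : j ≠ B.act g i := fun he => hj (he ▸ B.maps_to g i hi)
            simp [Pi.single_apply, hjact]
      · have h1 : sigma (toAlg (K := K) B) g i = i := by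
          rw [sigma, dif_neg]
          intro hc
          have := hc i hi
          simp at this
        rw [h1]
        exact (B.norm g i hi).symm

end Statement15Aux

/-- Every partial action of `G` on `Λ = K^n` by `K`-algebra
isomorphisms restricts to a partial action of `G` on the set of standard
primitive idempotents `{e_1, …, e_n}` (identified with `Fin n`): each `S g` is
the span of the idempotents it contains, and restriction gives a bijection
between partial actions of `G` on `K^n` and partial actions of `G` on
`{e_1, …, e_n}`. -/
theorem statement15 (K : Type*) [Field K] (G : Type*) [Group G] (n : ℕ) (hn : 0 < n) :
    ∃ Φ : AlgebraPartialAction K G n ≃ SetPartialAction G (Fin n),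
      ∀ (A : AlgebraPartialAction K G n) (g : G),
        (A.S g = {x : Fin n → K | ∀ i : Fin n, i ∉ (Φ A).Y g → x i = 0}) ∧
        (∀ i : Fin n, i ∈ (Φ A).Y g ↔ Pi.single i (1 : K) ∈ A.S g) ∧
        (∀ i ∈ (Φ A).Y (g⁻¹),
          A.act g (Pi.single i (1 : K)) = Pi.single ((Φ A).act g i) (1 : K)) := by
  refine ⟨Statement15Aux.theEquiv, ?_⟩
  intro A g
  refine ⟨?_, fun i => Iff.rfl, fun i hi => Statement15Aux.act_single A g i hi⟩
  ext x
  constructor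
  · intro h i hi
    exact (Statement15Aux.mem_S_iff A g x).mp h i hi
  · intro h
    exact (Statement15Aux.mem_S_iff A g x).mpr h
end

section
/- Let K be a field, n a positive integer, Λ = K^n = ⨁_{i=1}^n K e_i, and α a partial action of a group G on Λ by K-algebra isomorphisms. Let θ be the induced partial action of G on the set Y = {e_1,…,e_n} of standard primitive idempotents, and let (X, ·) be an enveloping action of (Y, θ): a G-set X containing Y with X = ∪_{g∈G} g·Y, Y_g = Y ∩ g·Y for all g ∈ G, and θ_g(y) = g·y for all y ∈ Y_{g⁻¹}. Let B = ⨁_{x∈X} K (finitely supported functions X → K with pointwise operations) with G acting by permuting coordinates: (β¹_g f)(x) = f(g⁻¹·x). Then (B, β¹), together with the embedding Λ → B sending e_i to the indicator function of e_i ∈ X, is an enveloping action of (Λ, α). -/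
/-- Let `α = (S, θ)` be a partial action of `G` on
`Λ = K^n` by `K`-algebra isomorphisms, and let `(X, ·)` be an enveloping action
of the induced partial action on the set `Y = {e_1, …, e_n}` of standard
primitive idempotents, embedded in `X` via the injection `ι`: `X` is covered by
the `G`-translates of `ι(Y)`, `e_i ∈ S g ↔ ι i ∈ Y ∩ g • ι(Y)`, and `θ g`
agrees with the `G`-action on idempotents in `S (g⁻¹)`. Let `B = ⨁_{x ∈ X} K`
(finitely supported functions `X → K` with pointwise operations) with `G`
permuting coordinates, `(β¹ g f) x = f (g⁻¹ • x)`. Then `(B, β¹)`, together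
with the embedding `Λ → B` sending `e_i` to the indicator of `ι i`, is an
enveloping action of `(Λ, α)`. -/
theorem statement16 {K : Type*} [Field K] {G : Type*} [Group G] (n : ℕ) (hn : 0 < n)
    (S : G → Set (Fin n → K)) (θ : G → (Fin n → K) → (Fin n → K))
    (hpa : IsPartialAction K G (Fin n → K) S θ)
    (X : Type*) [MulAction G X]
    (ι : Fin n → X) (hι : Function.Injective ι)
    (hcover : ∀ x : X, ∃ (g : G) (i : Fin n), x = g • ι i)
    (hinter : ∀ (g : G) (i : Fin n),
      Pi.single i (1 : K) ∈ S g ↔ ι i ∈ (g • ·) '' Set.range ι)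
    (hrestr : ∀ (g : G) (i : Fin n), Pi.single i (1 : K) ∈ S (g⁻¹) →
      ∃ i' : Fin n, ι i' = g • ι i ∧ θ g (Pi.single i (1 : K)) = Pi.single i' (1 : K)) :
    IsEnvelopingAction K G (Fin n → K) (X →₀ K) S θ
      (fun g f => Finsupp.equivMapDomain (MulAction.toPerm g) f)
      (fun v => ∑ i : Fin n, Finsupp.single (ι i) (v i)) := by
  classical
  set φ : (Fin n → K) → (X →₀ K) := fun v => ∑ i : Fin n, Finsupp.single (ι i) (v i) with hφ
  set β : G → (X →₀ K) → (X →₀ K) :=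
    fun g f => Finsupp.equivMapDomain (MulAction.toPerm g) f with hβ
  have beta_apply : ∀ (g : G) (f : X →₀ K) (x : X), β g f x = f (g⁻¹ • x) := by
    intro g f x; rfl
  have beta_single : ∀ (g : G) (x : X) (c : K),
      β g (Finsupp.single x c) = Finsupp.single (g • x) c := by
    intro g x c
    ext z
    rw [beta_apply, Finsupp.single_apply, Finsupp.single_apply]
    by_cases hz : g • x = z
    · rw [if_pos hz, if_pos]; rw [← hz]; simp
    · rw [if_neg hz, if_neg]
      intro hc
      exact hz (by rw [hc]; simp)
  have beta_add : ∀ (g : G) (f₁ f₂ : X →₀ K), β g (f₁ + f₂) = β g f₁ + β g f₂ := by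
    intro g f₁ f₂
    ext z
    rw [beta_apply]
    simp only [Finsupp.add_apply, beta_apply]
  have beta_zero : ∀ g : G, β g 0 = 0 := by
    intro g; ext z; rw [beta_apply]; simp
  have beta_sum : ∀ (g : G) (s : Finset (Fin n)) (f : Fin n → (X →₀ K)),
      β g (∑ i ∈ s, f i) = ∑ i ∈ s, β g (f i) := by
    intro g s f
    induction s using Finset.cons_induction with
    | empty => simpa using beta_zero g
    | cons a s ha ih => rw [Finset.sum_cons, Finset.sum_cons, beta_add, ih]
  have pi_smul_single : ∀ (i : Fin n) (c : K), c • (Pi.single i 1 : Fin n → K) = Pi.single i c := by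
    intro i c
    funext j
    rcases eq_or_ne j i with rfl | hj
    · simp
    · simp [Pi.single_eq_of_ne hj]
  have phi_at : ∀ (v : Fin n → K) (j : Fin n), φ v (ι j) = v j := by
    intro v j
    rw [hφ]
    simp only [Finsupp.finset_sum_apply, Finsupp.single_apply, hι.eq_iff]
    simp
  have phi_off : ∀ (v : Fin n → K) (x : X), x ∉ Set.range ι → φ v x = 0 := by
    intro v x hx
    rw [hφ]
    simp only [Finsupp.finset_sum_apply, Finsupp.single_apply]
    refine Finset.sum_eq_zero fun i _ => ?_
    rw [if_neg]
    exact fun h => hx ⟨i, h⟩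
  have phi_single : ∀ (i : Fin n) (c : K), φ (Pi.single i c) = Finsupp.single (ι i) c := by
    intro i c
    simp only [hφ]
    rw [Finset.sum_eq_single i]
    · simp
    · intro j _ hji; rw [Pi.single_eq_of_ne hji, Finsupp.single_zero]
    · simp
  have phi_zero : φ 0 = 0 := by rw [hφ]; simp
  have phi_add : ∀ v w : Fin n → K, φ (v + w) = φ v + φ w := by
    intro v w
    rw [hφ]
    simp [Finsupp.single_add, Finset.sum_add_distrib]
  have phi_sum : ∀ (s : Finset (Fin n)) (f : Fin n → (Fin n → K)),
      φ (∑ i ∈ s, f i) = ∑ i ∈ s, φ (f i) := by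
    intro s f
    induction s using Finset.cons_induction with
    | empty => simpa using phi_zero
    | cons a s ha ih => rw [Finset.sum_cons, Finset.sum_cons, phi_add, ih]
  have mem_range_phi : ∀ f : X →₀ K, (∀ x : X, x ∉ Set.range ι → f x = 0) →
      f ∈ Set.range φ := by
    intro f h
    refine ⟨fun i => f (ι i), Finsupp.ext fun x => ?_⟩
    by_cases hx : x ∈ Set.range ι
    · obtain ⟨i, rfl⟩ := hx; exact phi_at _ i
    · rw [phi_off _ _ hx, h x hx]
  -- membership in ideals S g is determined coordinatewise
  have single_mem : ∀ (g : G) (v : Fin n → K), v ∈ S g → ∀ i : Fin n, v i ≠ 0 →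
      Pi.single i (1 : K) ∈ S g := by
    intro g v hv i hvi
    have h1 : Pi.single i (1 : K) * v = Pi.single i (v i) := by
      funext j
      rcases eq_or_ne j i with rfl | hj
      · simp
      · simp [Pi.single_eq_of_ne hj]
    have h2 := hpa.mul_mem_left g (Pi.single i 1) v hv
    rw [h1] at h2
    have h3 := hpa.smul_mem g (v i)⁻¹ _ h2
    have h4 : (v i)⁻¹ • (Pi.single i (v i) : Fin n → K) = Pi.single i (1 : K) := by
      rw [← pi_smul_single i (v i), smul_smul, inv_mul_cancel₀ hvi, one_smul]
    rwa [h4] at h3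
  have sum_mem : ∀ (g : G) (s : Finset (Fin n)) (f : Fin n → (Fin n → K)),
      (∀ i ∈ s, f i ∈ S g) → ∑ i ∈ s, f i ∈ S g := by
    intro g s f hf
    induction s using Finset.cons_induction with
    | empty => simpa using hpa.zero_mem g
    | cons a s ha ih =>
        rw [Finset.sum_cons]
        exact hpa.add_mem g _ (hf a (Finset.mem_cons_self a s)) _
          (ih fun i hi => hf i (Finset.mem_cons_of_mem hi))
  have mem_of_single : ∀ (g : G) (v : Fin n → K),
      (∀ i : Fin n, v i ≠ 0 → Pi.single i (1 : K) ∈ S g) → v ∈ S g := by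
    intro g v hv
    rw [← Finset.univ_sum_single v]
    refine sum_mem g _ _ fun i _ => ?_
    rcases eq_or_ne (v i) 0 with h | h
    · rw [h, Pi.single_zero]; exact hpa.zero_mem g
    · have := hpa.smul_mem g (v i) _ (hv i h)
      rwa [pi_smul_single i (v i)] at this
  have theta_zero : ∀ g : G, θ g 0 = 0 := by
    intro g
    have := hpa.map_smul g (0 : K) 0 (hpa.zero_mem _)
    simpa using this
  have theta_sum : ∀ (g : G) (s : Finset (Fin n)) (f : Fin n → (Fin n → K)),
      (∀ i ∈ s, f i ∈ S g⁻¹) → θ g (∑ i ∈ s, f i) = ∑ i ∈ s, θ g (f i) := by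
    intro g s f hf
    induction s using Finset.cons_induction with
    | empty => simpa using theta_zero g
    | cons a s ha ih =>
        rw [Finset.sum_cons, Finset.sum_cons,
          hpa.map_add g _ (hf a (Finset.mem_cons_self a s)) _
            (sum_mem g⁻¹ s f fun i hi => hf i (Finset.mem_cons_of_mem hi)),
          ih fun i hi => hf i (Finset.mem_cons_of_mem hi)]
  constructor
  · intro x; ext y; rw [beta_apply]; simp
  · intro g h x; ext y; rw [beta_apply, beta_apply, beta_apply, mul_inv_rev, mul_smul]
  · intro g x y; ext z; rw [beta_apply]; simp only [Finsupp.add_apply, beta_apply]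
  · intro g x y; ext z
    rw [Finsupp.mul_apply, beta_apply, beta_apply, beta_apply, Finsupp.mul_apply]
  · intro g r x; ext z; rw [beta_apply]; simp only [Finsupp.smul_apply, beta_apply]
  · intro g
    refine Function.bijective_iff_has_inverse.mpr ⟨β g⁻¹, fun f => ?_, fun f => ?_⟩ <;>
      · ext x; rw [beta_apply, beta_apply]; simp
  · intro v w h
    funext i
    have := congrArg (fun f : X →₀ K => f (ι i)) h
    simpa [phi_at] using this
  · exact phi_add
  · intro v w
    ext x
    by_cases hx : x ∈ Set.range ι
    · obtain ⟨i, rfl⟩ := hx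
      rw [Finsupp.mul_apply, phi_at, phi_at, phi_at, Pi.mul_apply]
    · rw [Finsupp.mul_apply, phi_off (v * w) _ hx, phi_off v _ hx, zero_mul]
  · intro r v
    rw [hφ]
    simp [Finsupp.smul_single, Finset.smul_sum, smul_eq_mul]
  · rintro a x ⟨v, rfl⟩
    refine mem_range_phi _ fun x hx => ?_
    rw [Finsupp.mul_apply, phi_off _ _ hx, mul_zero]
  · rintro a x ⟨v, rfl⟩
    refine mem_range_phi _ fun x hx => ?_
    rw [Finsupp.mul_apply, phi_off _ _ hx, zero_mul]
  · rw [eq_top_iff]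
    intro f _
    induction f using Finsupp.induction with
    | zero => exact AddSubmonoid.zero_mem _
    | single_add x b f hxf hb ih =>
        refine AddSubmonoid.add_mem _ ?_ (ih (AddSubmonoid.mem_top f))
        obtain ⟨g, i, rfl⟩ := hcover x
        refine AddSubmonoid.subset_closure (Set.mem_iUnion.mpr ⟨g, ⟨φ (Pi.single i b),
          ⟨Pi.single i b, rfl⟩, ?_⟩⟩)
        rw [phi_single]
        ext z
        rw [beta_apply, Finsupp.single_apply, Finsupp.single_apply]
        by_cases hz : g • ι i = z
        · rw [if_pos hz, if_pos]; rw [← hz]; simp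
        · rw [if_neg hz, if_neg]
          intro hc
          exact hz (by rw [hc]; simp)
  · intro g
    ext f
    constructor
    · rintro ⟨v, hv, rfl⟩
      refine ⟨⟨v, rfl⟩, β g⁻¹ (φ v), ?_, ?_⟩
      · refine mem_range_phi _ fun x hx => ?_
        rw [beta_apply]
        simp only [inv_inv]
        by_cases hgx : g • x ∈ Set.range ι
        · obtain ⟨i, hi⟩ := hgx
          rw [← hi, phi_at]
          by_contra hvi
          obtain ⟨y, ⟨j, rfl⟩, hj⟩ := (hinter g i).mp (single_mem g v hv i hvi)
          exact hx ⟨j, smul_left_cancel g (hj.trans hi)⟩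
        · exact phi_off _ _ hgx
      · ext x; rw [beta_apply, beta_apply]; simp
    · rintro ⟨⟨v, rfl⟩, f', ⟨w, rfl⟩, hf'⟩
      refine ⟨v, ?_, rfl⟩
      refine mem_of_single g v fun i hvi => ?_
      refine (hinter g i).mpr ?_
      have h1 : φ w (g⁻¹ • ι i) = v i := by
        have := congrArg (fun f : X →₀ K => f (ι i)) hf'
        simpa [beta_apply, phi_at] using this
      have h2 : g⁻¹ • ι i ∈ Set.range ι := by
        by_contra hc
        exact hvi (by rw [← h1, phi_off _ _ hc])
      obtain ⟨j, hj⟩ := h2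
      exact ⟨ι j, ⟨j, rfl⟩, by rw [hj]; simp⟩
  · intro g v hv
    have hmem : ∀ i : Fin n, Pi.single i (v i) ∈ S g⁻¹ := by
      intro i
      rcases eq_or_ne (v i) 0 with h | h
      · rw [h, Pi.single_zero]; exact hpa.zero_mem _
      · have := hpa.smul_mem g⁻¹ (v i) _ (single_mem g⁻¹ v hv i h)
        rwa [pi_smul_single i (v i)] at this
    have hdec : θ g v = ∑ i : Fin n, θ g (Pi.single i (v i)) := by
      conv_lhs => rw [← Finset.univ_sum_single v]
      exact theta_sum g _ _ fun i _ => hmem i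
    have hterm : ∀ i : Fin n, φ (θ g (Pi.single i (v i))) = Finsupp.single (g • ι i) (v i) := by
      intro i
      rcases eq_or_ne (v i) 0 with h | h
      · rw [h, Pi.single_zero, theta_zero, phi_zero, Finsupp.single_zero]
      · obtain ⟨i', hi', hθ⟩ := hrestr g i (single_mem g⁻¹ v hv i h)
        have : θ g (Pi.single i (v i)) = Pi.single i' (v i) := by
          rw [← pi_smul_single i (v i),
            hpa.map_smul g (v i) _ (single_mem g⁻¹ v hv i h), hθ, pi_smul_single i' (v i)]
        rw [this, phi_single, hi']
    rw [hdec, phi_sum]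
    have hrhs : β g (φ v) = ∑ i : Fin n, Finsupp.single (g • ι i) (v i) := by
      have : φ v = ∑ i : Fin n, Finsupp.single (ι i) (v i) := by rw [hφ]
      rw [this, beta_sum]
      exact Finset.sum_congr rfl fun i _ => beta_single g (ι i) (v i)
    rw [hrhs]
    exact Finset.sum_congr rfl fun i _ => hterm i
end
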